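/- arXiv:2501.03350 — 7 statements merged into one kernel-verified Lean document; each statement's English description precedes it below -/
import Mathlib

section
/- Let C be a 2-copula and let μ_C be the probability measure on [0,1]² induced by C. Then C is I(-1,-1) if, and only if, C(u,v)·C(u',v') ≥ C(u,v')·C(u',v) for all u, v, u', v' in [0,1] with u ≤ u' and v ≤ v'. -/
open MeasureTheory Set Filter Topology

/-- A (bivariate) 2-copula. -/
structure IsCopula2 (C : ℝ → ℝ → ℝ) : Prop where
  grounded_left : ∀ v ∈ Icc (0:ℝ) 1, C 0 v = 0
  grounded_right : ∀ u ∈ Icc (0:ℝ) 1, C u 0 = 0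
  margin_left : ∀ u ∈ Icc (0:ℝ) 1, C u 1 = u
  margin_right : ∀ v ∈ Icc (0:ℝ) 1, C 1 v = v
  twoIncreasing : ∀ u u' v v' : ℝ, u ∈ Icc (0:ℝ) 1 → u' ∈ Icc (0:ℝ) 1 →
    v ∈ Icc (0:ℝ) 1 → v' ∈ Icc (0:ℝ) 1 → u ≤ u' → v ≤ v' →
    0 ≤ C u' v' - C u' v - C u v' + C u v

/-- A joint law `μ` on `ℝ × ℝ` is increasing according to the direction `(a₁, a₂)`
(the I(α) property): the conditional probability
`P[a₁U > x₁, a₂V > x₂ | a₁U > x₁', a₂V > x₂']` is nondecreasing in `(x₁', x₂')`,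
expressed equivalently via the cross-product inequality. -/
def IsIncDir2 (μ : Measure (ℝ × ℝ)) (a₁ a₂ : ℝ) : Prop :=
  ∀ x₁ x₂ x₁' x₂' x₁'' x₂'' : ℝ, x₁' ≤ x₁'' → x₂' ≤ x₂'' →
    μ {p : ℝ × ℝ | (a₁ * p.1 > x₁ ∧ a₂ * p.2 > x₂) ∧ (a₁ * p.1 > x₁' ∧ a₂ * p.2 > x₂')} *
      μ {p : ℝ × ℝ | a₁ * p.1 > x₁'' ∧ a₂ * p.2 > x₂''} ≤
    μ {p : ℝ × ℝ | (a₁ * p.1 > x₁ ∧ a₂ * p.2 > x₂) ∧ (a₁ * p.1 > x₁'' ∧ a₂ * p.2 > x₂'')} *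
      μ {p : ℝ × ℝ | a₁ * p.1 > x₁' ∧ a₂ * p.2 > x₂'}

namespace CopulaProofAux

noncomputable def clamp (x : ℝ) : ℝ := max 0 (min x 1)

lemma clamp_mem (x : ℝ) : clamp x ∈ Icc (0:ℝ) 1 :=
  ⟨le_max_left _ _, max_le zero_le_one (min_le_right _ _)⟩

lemma clamp_of_mem {x : ℝ} (hx : x ∈ Icc (0:ℝ) 1) : clamp x = x := by
  rw [clamp, min_eq_left hx.2, max_eq_right hx.1]

lemma clamp_mono : Monotone clamp := fun x y h =>
  max_le_max le_rfl (min_le_min h le_rfl)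

lemma clamp_min (a b : ℝ) : clamp (min a b) = min (clamp a) (clamp b) :=
  clamp_mono.map_min

lemma clamp_le_max (x : ℝ) : clamp x ≤ max 0 x := max_le_max le_rfl (min_le_left _ _)

lemma clamp_lip {x y : ℝ} (h : y ≤ x) : clamp x - clamp y ≤ x - y := by
  have h1 : clamp x ≤ clamp y + (x - y) := by
    apply max_le
    · have := (clamp_mem y).1
      rw [clamp] at this ⊢
      linarith
    · rcases le_total y 1 with hy | hy
      · have : min y 1 = y := min_eq_left hy
        rw [clamp, this]
        have := min_le_left x 1
        have := le_max_right (0:ℝ) y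
        linarith
      · have : min y 1 = 1 := min_eq_right hy
        rw [clamp, this]
        have := min_le_right x 1
        have := le_max_right (0:ℝ) 1
        linarith
  linarith

variable {C : ℝ → ℝ → ℝ}

lemma min_mem {x y : ℝ} (hx : x ∈ Icc (0:ℝ) 1) (hy : y ∈ Icc (0:ℝ) 1) :
    min x y ∈ Icc (0:ℝ) 1 := ⟨le_min hx.1 hy.1, le_trans (min_le_left _ _) hx.2⟩

lemma Cnonneg (hC : IsCopula2 C) {u v : ℝ} (hu : u ∈ Icc (0:ℝ) 1) (hv : v ∈ Icc (0:ℝ) 1) :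
    0 ≤ C u v := by
  have h0 : (0:ℝ) ∈ Icc (0:ℝ) 1 := ⟨le_rfl, zero_le_one⟩
  have := hC.twoIncreasing 0 u 0 v h0 hu h0 hv hu.1 hv.1
  have h1 := hC.grounded_right u hu
  have h2 := hC.grounded_left v hv
  have h3 := hC.grounded_left 0 h0
  linarith

lemma Cmono1 (hC : IsCopula2 C) {u u' v : ℝ} (hu : u ∈ Icc (0:ℝ) 1) (hu' : u' ∈ Icc (0:ℝ) 1)
    (hv : v ∈ Icc (0:ℝ) 1) (h : u ≤ u') : C u v ≤ C u' v := by
  have h0 : (0:ℝ) ∈ Icc (0:ℝ) 1 := ⟨le_rfl, zero_le_one⟩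
  have := hC.twoIncreasing u u' 0 v hu hu' h0 hv h hv.1
  have h1 := hC.grounded_right u hu
  have h2 := hC.grounded_right u' hu'
  linarith

lemma Cmono2 (hC : IsCopula2 C) {u v v' : ℝ} (hu : u ∈ Icc (0:ℝ) 1) (hv : v ∈ Icc (0:ℝ) 1)
    (hv' : v' ∈ Icc (0:ℝ) 1) (h : v ≤ v') : C u v ≤ C u v' := by
  have h0 : (0:ℝ) ∈ Icc (0:ℝ) 1 := ⟨le_rfl, zero_le_one⟩
  have := hC.twoIncreasing 0 u v v' h0 hu hv hv' hu.1 h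
  have h1 := hC.grounded_left v hv
  have h2 := hC.grounded_left v' hv'
  linarith

lemma Clip1 (hC : IsCopula2 C) {u u' v : ℝ} (hu : u ∈ Icc (0:ℝ) 1) (hu' : u' ∈ Icc (0:ℝ) 1)
    (hv : v ∈ Icc (0:ℝ) 1) (h : u ≤ u') : C u' v - C u v ≤ u' - u := by
  have h1 : (1:ℝ) ∈ Icc (0:ℝ) 1 := ⟨zero_le_one, le_rfl⟩
  have := hC.twoIncreasing u u' v 1 hu hu' hv h1 h hv.2
  have h2 := hC.margin_left u hu
  have h3 := hC.margin_left u' hu'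
  linarith

lemma Clip2 (hC : IsCopula2 C) {u v v' : ℝ} (hu : u ∈ Icc (0:ℝ) 1) (hv : v ∈ Icc (0:ℝ) 1)
    (hv' : v' ∈ Icc (0:ℝ) 1) (h : v ≤ v') : C u v' - C u v ≤ v' - v := by
  have h1 : (1:ℝ) ∈ Icc (0:ℝ) 1 := ⟨zero_le_one, le_rfl⟩
  have := hC.twoIncreasing u 1 v v' hu h1 hv hv' hu.2 h
  have h2 := hC.margin_right v hv
  have h3 := hC.margin_right v' hv'
  linarith

lemma set_single (x₁ x₂ : ℝ) :
    {p : ℝ × ℝ | (-1:ℝ) * p.1 > x₁ ∧ (-1:ℝ) * p.2 > x₂} =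
      {p : ℝ × ℝ | p.1 < -x₁ ∧ p.2 < -x₂} := by
  ext p
  simp only [mem_setOf_eq, gt_iff_lt]
  constructor
  · rintro ⟨h1, h2⟩; exact ⟨by linarith, by linarith⟩
  · rintro ⟨h1, h2⟩; exact ⟨by linarith, by linarith⟩

lemma set_pair (x₁ x₂ y₁ y₂ : ℝ) :
    {p : ℝ × ℝ | ((-1:ℝ) * p.1 > x₁ ∧ (-1:ℝ) * p.2 > x₂) ∧
        ((-1:ℝ) * p.1 > y₁ ∧ (-1:ℝ) * p.2 > y₂)} =
      {p : ℝ × ℝ | p.1 < min (-x₁) (-y₁) ∧ p.2 < min (-x₂) (-y₂)} := by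
  ext p
  simp only [mem_setOf_eq, gt_iff_lt, lt_min_iff]
  constructor
  · rintro ⟨⟨h1, h2⟩, h3, h4⟩
    exact ⟨⟨by linarith, by linarith⟩, by linarith, by linarith⟩
  · rintro ⟨⟨h1, h3⟩, h2, h4⟩
    exact ⟨⟨by linarith, by linarith⟩, by linarith, by linarith⟩

lemma measure_lt_lt (hC : IsCopula2 C) (μ : Measure (ℝ × ℝ)) [IsProbabilityMeasure μ]
    (hsupp : μ (Icc (0:ℝ) 1 ×ˢ Icc (0:ℝ) 1) = 1)
    (hμC : ∀ u ∈ Icc (0:ℝ) 1, ∀ v ∈ Icc (0:ℝ) 1,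
      μ (Icc 0 u ×ˢ Icc 0 v) = ENNReal.ofReal (C u v))
    (a b : ℝ) :
    μ {p : ℝ × ℝ | p.1 < a ∧ p.2 < b} = ENNReal.ofReal (C (clamp a) (clamp b)) := by
  set K : Set (ℝ × ℝ) := Icc (0:ℝ) 1 ×ˢ Icc (0:ℝ) 1 with hK
  have hKm : MeasurableSet K := measurableSet_Icc.prod measurableSet_Icc
  have hKc : μ Kᶜ = 0 := by
    rw [measure_compl hKm (measure_ne_top μ K), hsupp, measure_univ, tsub_self]
  have hScap : ∀ S : Set (ℝ × ℝ), μ S = μ (S ∩ K) := by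
    intro S
    refine le_antisymm ?_ (measure_mono inter_subset_left)
    calc μ S ≤ μ ((S ∩ K) ∪ Kᶜ) := measure_mono (fun p hp => by
          by_cases h : p ∈ K
          · exact Or.inl ⟨hp, h⟩
          · exact Or.inr h)
      _ ≤ μ (S ∩ K) + μ Kᶜ := measure_union_le _ _
      _ = μ (S ∩ K) := by rw [hKc, add_zero]
  rcases le_or_gt a 0 with ha | ha
  · have h1 : clamp a = 0 := max_eq_left (le_trans (min_le_left a 1) ha)
    rw [h1, hC.grounded_left _ (clamp_mem b), ENNReal.ofReal_zero, hScap]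
    have : {p : ℝ × ℝ | p.1 < a ∧ p.2 < b} ∩ K = ∅ :=
      eq_empty_iff_forall_notMem.mpr fun p hp =>
        absurd hp.1.1 (not_lt.mpr (le_trans ha hp.2.1.1))
    rw [this, measure_empty]
  rcases le_or_gt b 0 with hb | hb
  · have h1 : clamp b = 0 := max_eq_left (le_trans (min_le_left b 1) hb)
    rw [h1, hC.grounded_right _ (clamp_mem a), ENNReal.ofReal_zero, hScap]
    have : {p : ℝ × ℝ | p.1 < a ∧ p.2 < b} ∩ K = ∅ :=
      eq_empty_iff_forall_notMem.mpr fun p hp =>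
        absurd hp.1.2 (not_lt.mpr (le_trans hb hp.2.2.1))
    rw [this, measure_empty]
  · -- 0 < a, 0 < b
    set un : ℕ → ℝ := fun n => clamp (a - 1 / ((n:ℝ) + 1)) with hun
    set vn : ℕ → ℝ := fun n => clamp (b - 1 / ((n:ℝ) + 1)) with hvn
    set s : ℕ → Set (ℝ × ℝ) := fun n => Icc (0:ℝ) (un n) ×ˢ Icc (0:ℝ) (vn n) with hs
    have hdiv : ∀ n m : ℕ, n ≤ m → (1:ℝ) / ((m:ℝ) + 1) ≤ 1 / ((n:ℝ) + 1) := by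
      intro n m hnm
      apply one_div_le_one_div_of_le
      · positivity
      · have : (n:ℝ) ≤ m := Nat.cast_le.mpr hnm
        linarith
    have humono : ∀ n m : ℕ, n ≤ m → un n ≤ un m := fun n m hnm =>
      clamp_mono (by have := hdiv n m hnm; linarith)
    have hvmono : ∀ n m : ℕ, n ≤ m → vn n ≤ vn m := fun n m hnm =>
      clamp_mono (by have := hdiv n m hnm; linarith)
    have hmono : Monotone s := by
      intro n m hnm
      exact Set.prod_mono (Icc_subset_Icc le_rfl (humono n m hnm))
        (Icc_subset_Icc le_rfl (hvmono n m hnm))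
    have hU : {p : ℝ × ℝ | p.1 < a ∧ p.2 < b} ∩ K = ⋃ n, s n := by
      ext p
      simp only [hK, hs, mem_inter_iff, mem_setOf_eq, mem_iUnion, mem_prod, mem_Icc]
      constructor
      · rintro ⟨⟨hpa, hpb⟩, ⟨hp10, hp11⟩, hp20, hp21⟩
        have hpos : (0:ℝ) < min (a - p.1) (b - p.2) :=
          lt_min_iff.mpr ⟨sub_pos.mpr hpa, sub_pos.mpr hpb⟩
        obtain ⟨n, hn⟩ := exists_nat_one_div_lt hpos
        refine ⟨n, ⟨hp10, ?_⟩, hp20, ?_⟩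
        · have h1 : (1:ℝ) / ((n:ℝ) + 1) < a - p.1 := lt_of_lt_of_le hn (min_le_left _ _)
          have : p.1 ≤ min (a - 1 / ((n:ℝ) + 1)) 1 := le_min (by linarith) hp11
          exact le_trans this (le_max_right _ _)
        · have h1 : (1:ℝ) / ((n:ℝ) + 1) < b - p.2 := lt_of_lt_of_le hn (min_le_right _ _)
          have : p.2 ≤ min (b - 1 / ((n:ℝ) + 1)) 1 := le_min (by linarith) hp21
          exact le_trans this (le_max_right _ _)
      · rintro ⟨n, ⟨hp10, hp11⟩, hp20, hp21⟩
        have hd : (0:ℝ) < 1 / ((n:ℝ) + 1) := by positivity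
        have hua : un n < a :=
          lt_of_le_of_lt (clamp_le_max _) (max_lt ha (by linarith))
        have hvb : vn n < b :=
          lt_of_le_of_lt (clamp_le_max _) (max_lt hb (by linarith))
        exact ⟨⟨lt_of_le_of_lt hp11 hua, lt_of_le_of_lt hp21 hvb⟩,
          ⟨hp10, le_trans hp11 (clamp_mem _).2⟩, hp20, le_trans hp21 (clamp_mem _).2⟩
    have hμs : ∀ n, μ (s n) = ENNReal.ofReal (C (un n) (vn n)) := fun n =>
      hμC _ (clamp_mem _) _ (clamp_mem _)
    have htend1 : Tendsto (fun n => μ (s n)) atTop (𝓝 (μ (⋃ n, s n))) :=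
      tendsto_measure_iUnion_atTop hmono
    -- the real limit
    have hule : ∀ n, un n ≤ clamp a := fun n => clamp_mono (by
      have : (0:ℝ) < 1 / ((n:ℝ) + 1) := by positivity
      linarith)
    have hvle : ∀ n, vn n ≤ clamp b := fun n => clamp_mono (by
      have : (0:ℝ) < 1 / ((n:ℝ) + 1) := by positivity
      linarith)
    have hudiff : ∀ n, clamp a - un n ≤ 1 / ((n:ℝ) + 1) := by
      intro n
      have := clamp_lip (x := a) (y := a - 1 / ((n:ℝ) + 1)) (by
        have : (0:ℝ) < 1 / ((n:ℝ) + 1) := by positivity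
        linarith)
      linarith
    have hvdiff : ∀ n, clamp b - vn n ≤ 1 / ((n:ℝ) + 1) := by
      intro n
      have := clamp_lip (x := b) (y := b - 1 / ((n:ℝ) + 1)) (by
        have : (0:ℝ) < 1 / ((n:ℝ) + 1) := by positivity
        linarith)
      linarith
    have hCge : ∀ n, 0 ≤ C (clamp a) (clamp b) - C (un n) (vn n) := by
      intro n
      have h1 : C (un n) (vn n) ≤ C (clamp a) (vn n) :=
        Cmono1 hC (clamp_mem _) (clamp_mem _) (clamp_mem _) (hule n)
      have h2 : C (clamp a) (vn n) ≤ C (clamp a) (clamp b) :=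
        Cmono2 hC (clamp_mem _) (clamp_mem _) (clamp_mem _) (hvle n)
      linarith
    have hCle : ∀ n, C (clamp a) (clamp b) - C (un n) (vn n) ≤ 2 / ((n:ℝ) + 1) := by
      intro n
      have h1 : C (clamp a) (clamp b) - C (un n) (clamp b) ≤ clamp a - un n :=
        Clip1 hC (clamp_mem _) (clamp_mem _) (clamp_mem _) (hule n)
      have h2 : C (un n) (clamp b) - C (un n) (vn n) ≤ clamp b - vn n :=
        Clip2 hC (clamp_mem _) (clamp_mem _) (clamp_mem _) (hvle n)
      have h3 := hudiff n
      have h4 := hvdiff n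
      have : (2:ℝ) / ((n:ℝ) + 1) = 1 / ((n:ℝ) + 1) + 1 / ((n:ℝ) + 1) := by ring
      linarith
    have hg : Tendsto (fun n : ℕ => (2:ℝ) / ((n:ℝ) + 1)) atTop (𝓝 0) := by
      have := tendsto_one_div_add_atTop_nhds_zero_nat.const_mul (2:ℝ)
      simpa [mul_one_div, div_eq_mul_inv] using this
    have h0 : Tendsto (fun n : ℕ => C (clamp a) (clamp b) - C (un n) (vn n)) atTop (𝓝 0) :=
      squeeze_zero hCge hCle hg
    have h1 : Tendsto (fun n => C (un n) (vn n)) atTop (𝓝 (C (clamp a) (clamp b))) := by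
      have := h0.const_sub (C (clamp a) (clamp b))
      simpa using this
    have h2 : Tendsto (fun n => μ (s n)) atTop
        (𝓝 (ENNReal.ofReal (C (clamp a) (clamp b)))) := by
      simp only [hμs]
      exact (ENNReal.continuous_ofReal.tendsto _).comp h1
    rw [hScap, hU]
    exact tendsto_nhds_unique htend1 h2

lemma tp2_step (hC : IsCopula2 C)
    (htp2 : ∀ u ∈ Icc (0:ℝ) 1, ∀ v ∈ Icc (0:ℝ) 1, ∀ u' ∈ Icc (0:ℝ) 1, ∀ v' ∈ Icc (0:ℝ) 1,
      u ≤ u' → v ≤ v' → C u v * C u' v' ≥ C u v' * C u' v)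
    {s t s' t' s'' t'' : ℝ} (hs : s ∈ Icc (0:ℝ) 1) (ht : t ∈ Icc (0:ℝ) 1)
    (hs' : s' ∈ Icc (0:ℝ) 1) (ht' : t' ∈ Icc (0:ℝ) 1)
    (hs'' : s'' ∈ Icc (0:ℝ) 1) (ht'' : t'' ∈ Icc (0:ℝ) 1)
    (h1 : s'' ≤ s') (h2 : t'' ≤ t') :
    C (min s s') (min t t') * C s'' t'' ≤ C (min s s'') (min t t'') * C s' t' := by
  have hσ := min_mem hs hs'
  have hτ := min_mem ht ht'
  rcases le_total s s'' with hss | hss <;> rcases le_total t t'' with htt | htt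
  · -- s ≤ s'', t ≤ t''
    rw [min_eq_left hss, min_eq_left htt, min_eq_left (le_trans hss h1),
      min_eq_left (le_trans htt h2)]
    have hle : C s'' t'' ≤ C s' t' :=
      le_trans (Cmono1 hC hs'' hs' ht'' h1) (Cmono2 hC hs' ht'' ht' h2)
    exact mul_le_mul_of_nonneg_left hle (Cnonneg hC hs ht)
  · -- s ≤ s'', t'' ≤ t
    rw [min_eq_left hss, min_eq_left (le_trans hss h1), min_eq_right htt]
    have hτt'' : t'' ≤ min t t' := le_min htt h2
    have key := htp2 s hs t'' ht'' s'' hs'' (min t t') hτ hss hτt''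
    have hle : C s'' (min t t') ≤ C s' t' :=
      le_trans (Cmono1 hC hs'' hs' hτ h1) (Cmono2 hC hs' hτ ht' (min_le_right _ _))
    calc C s (min t t') * C s'' t'' ≤ C s t'' * C s'' (min t t') := key
      _ ≤ C s t'' * C s' t' :=
        mul_le_mul_of_nonneg_left hle (Cnonneg hC hs ht'')
  · -- s'' ≤ s, t ≤ t''
    rw [min_eq_right hss, min_eq_left htt, min_eq_left (le_trans htt h2)]
    have hσs'' : s'' ≤ min s s' := le_min hss h1
    have key := htp2 s'' hs'' t ht (min s s') hσ t'' ht'' hσs'' htt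
    have hle : C (min s s') t'' ≤ C s' t' :=
      le_trans (Cmono1 hC hσ hs' ht'' (min_le_right _ _)) (Cmono2 hC hs' ht'' ht' h2)
    calc C (min s s') t * C s'' t''
        = C s'' t'' * C (min s s') t := mul_comm _ _
      _ ≤ C s'' t * C (min s s') t'' := key
      _ ≤ C s'' t * C s' t' :=
        mul_le_mul_of_nonneg_left hle (Cnonneg hC hs'' ht)
  · -- s'' ≤ s, t'' ≤ t
    rw [min_eq_right hss, min_eq_right htt, mul_comm (C s'' t'')]
    have hle : C (min s s') (min t t') ≤ C s' t' :=
      le_trans (Cmono1 hC hσ hs' hτ (min_le_right _ _))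
        (Cmono2 hC hs' hτ ht' (min_le_right _ _))
    exact mul_le_mul_of_nonneg_right hle (Cnonneg hC hs'' ht'')

end CopulaProofAux

open CopulaProofAux in
theorem copula_I_neg1_neg1_iff (C : ℝ → ℝ → ℝ) (hC : IsCopula2 C)
    (μ : Measure (ℝ × ℝ)) [IsProbabilityMeasure μ]
    (hsupp : μ (Icc (0:ℝ) 1 ×ˢ Icc (0:ℝ) 1) = 1)
    (hμC : ∀ u ∈ Icc (0:ℝ) 1, ∀ v ∈ Icc (0:ℝ) 1,
      μ (Icc 0 u ×ˢ Icc 0 v) = ENNReal.ofReal (C u v)) :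
    IsIncDir2 μ (-1) (-1) ↔
      ∀ u ∈ Icc (0:ℝ) 1, ∀ v ∈ Icc (0:ℝ) 1, ∀ u' ∈ Icc (0:ℝ) 1, ∀ v' ∈ Icc (0:ℝ) 1,
        u ≤ u' → v ≤ v' →
        C u v * C u' v' ≥ C u v' * C u' v := by
  have mlem := measure_lt_lt hC μ hsupp hμC
  constructor
  · intro h u hu v hv u' hu' v' hv' huu hvv
    have key := h (-u) (-v') (-u') (-v') (-u') (-v) le_rfl (by linarith)
    rw [set_pair, set_pair, set_single, set_single] at key
    simp only [neg_neg] at key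
    rw [min_self, min_eq_left huu, min_eq_right hvv] at key
    rw [mlem, mlem, mlem, mlem, clamp_of_mem hu, clamp_of_mem hv, clamp_of_mem hu',
      clamp_of_mem hv'] at key
    rw [← ENNReal.ofReal_mul (Cnonneg hC hu hv'),
      ← ENNReal.ofReal_mul (Cnonneg hC hu hv)] at key
    exact (ENNReal.ofReal_le_ofReal_iff
      (mul_nonneg (Cnonneg hC hu hv) (Cnonneg hC hu' hv'))).mp key
  · intro htp2 x₁ x₂ x₁' x₂' x₁'' x₂'' h1 h2
    rw [set_pair, set_pair, set_single, set_single, mlem, mlem, mlem, mlem,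
      clamp_min, clamp_min, clamp_min, clamp_min]
    rw [← ENNReal.ofReal_mul (Cnonneg hC (min_mem (clamp_mem _) (clamp_mem _))
        (min_mem (clamp_mem _) (clamp_mem _))),
      ← ENNReal.ofReal_mul (Cnonneg hC (min_mem (clamp_mem _) (clamp_mem _))
        (min_mem (clamp_mem _) (clamp_mem _)))]
    exact ENNReal.ofReal_le_ofReal
      (tp2_step hC htp2 (clamp_mem (-x₁)) (clamp_mem (-x₂)) (clamp_mem (-x₁'))
        (clamp_mem (-x₂')) (clamp_mem (-x₁'')) (clamp_mem (-x₂''))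
        (clamp_mono (neg_le_neg h1)) (clamp_mono (neg_le_neg h2)))
end

section
/- Let C be a 2-copula and let μ_C be the probability measure on [0,1]² induced by C. Then C is I(1,-1) if, and only if, [v - C(u,v)]·[v' - C(u',v')] ≤ [v - C(u',v)]·[v' - C(u,v')] for all u, v, u', v' in [0,1] with u ≤ u' and v ≤ v'. -/
open MeasureTheory Set

namespace CopAux

lemma mono1 {C : ℝ → ℝ → ℝ} (hC : IsCopula2 C) {u u' v : ℝ} (hu : u ∈ Icc (0:ℝ) 1)
    (hu' : u' ∈ Icc (0:ℝ) 1) (hv : v ∈ Icc (0:ℝ) 1) (h : u ≤ u') : C u v ≤ C u' v := by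
  have := hC.twoIncreasing u u' 0 v hu hu' (by simp) hv h hv.1
  have h1 := hC.grounded_right u hu
  have h2 := hC.grounded_right u' hu'
  linarith

lemma cop_nonneg {C : ℝ → ℝ → ℝ} (hC : IsCopula2 C) {u v : ℝ} (hu : u ∈ Icc (0:ℝ) 1)
    (hv : v ∈ Icc (0:ℝ) 1) : 0 ≤ C u v := by
  have := mono1 hC (by simp : (0:ℝ) ∈ Icc (0:ℝ) 1) hu hv hu.1
  have h0 := hC.grounded_left v hv
  linarith

lemma cop_le {C : ℝ → ℝ → ℝ} (hC : IsCopula2 C) {u v : ℝ} (hu : u ∈ Icc (0:ℝ) 1)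
    (hv : v ∈ Icc (0:ℝ) 1) : C u v ≤ v := by
  have := mono1 hC hu (by simp : (1:ℝ) ∈ Icc (0:ℝ) 1) hv hu.2
  have h1 := hC.margin_right v hv
  linarith

variable {C : ℝ → ℝ → ℝ}

/-- G x y = y - C x y is nonneg -/
lemma g_nonneg (hC : IsCopula2 C) {u v : ℝ} (hu : u ∈ Icc (0:ℝ) 1) (hv : v ∈ Icc (0:ℝ) 1) :
    0 ≤ v - C u v := by linarith [cop_le hC hu hv]

/-- G antitone in first argument -/
lemma g_anti (hC : IsCopula2 C) {u u' v : ℝ} (hu : u ∈ Icc (0:ℝ) 1) (hu' : u' ∈ Icc (0:ℝ) 1)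
    (hv : v ∈ Icc (0:ℝ) 1) (h : u ≤ u') : v - C u' v ≤ v - C u v := by
  linarith [mono1 hC hu hu' hv h]

/-- G monotone in second argument -/
lemma g_mono (hC : IsCopula2 C) {u v v' : ℝ} (hu : u ∈ Icc (0:ℝ) 1) (hv : v ∈ Icc (0:ℝ) 1)
    (hv' : v' ∈ Icc (0:ℝ) 1) (h : v ≤ v') : v - C u v ≤ v' - C u v' := by
  have := hC.twoIncreasing u 1 v v' hu (by simp) hv hv' hu.2 h
  have h1 := hC.margin_right v hv
  have h2 := hC.margin_right v' hv'
  linarith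

lemma keyIneq (hC : IsCopula2 C)
    (H : ∀ u ∈ Icc (0:ℝ) 1, ∀ v ∈ Icc (0:ℝ) 1, ∀ u' ∈ Icc (0:ℝ) 1, ∀ v' ∈ Icc (0:ℝ) 1,
        u ≤ u' → v ≤ v' → (v - C u v) * (v' - C u' v') ≤ (v - C u' v) * (v' - C u v'))
    {a a' a'' b b' b'' : ℝ} (ha : a ∈ Icc (0:ℝ) 1) (ha' : a' ∈ Icc (0:ℝ) 1)
    (ha'' : a'' ∈ Icc (0:ℝ) 1) (hb : b ∈ Icc (0:ℝ) 1) (hb' : b' ∈ Icc (0:ℝ) 1)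
    (hb'' : b'' ∈ Icc (0:ℝ) 1) (haa : a' ≤ a'') (hbb : b'' ≤ b') :
    (min b b' - C (max a a') (min b b')) * (b'' - C a'' b'') ≤
      (min b b'' - C (max a a'') (min b b'')) * (b' - C a' b') := by
  rcases le_total a a' with h1 | h1
  · -- a ≤ a' : max a a' = a', max a a'' = a''
    rw [max_eq_right h1, max_eq_right (h1.trans haa)]
    rcases le_total b' b with h2 | h2
    · -- b' ≤ b, so b'' ≤ b : mins are b', b''
      rw [min_eq_right h2, min_eq_right (hbb.trans h2)]
      ring_nf
      exact le_of_eq (by ring)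
    · rcases le_total b'' b with h3 | h3
      · -- b'' ≤ b ≤ b' : mins are b, b''
        rw [min_eq_left h2, min_eq_right h3]
        calc (b - C a' b) * (b'' - C a'' b'') = (b'' - C a'' b'') * (b - C a' b) := by ring
          _ ≤ (b'' - C a'' b'') * (b' - C a' b') :=
              mul_le_mul_of_nonneg_left (g_mono hC ha' hb hb' h2) (g_nonneg hC ha'' hb'')
      · -- b ≤ b'' : mins are b, b
        rw [min_eq_left h2, min_eq_left h3]
        calc (b - C a' b) * (b'' - C a'' b'')
            ≤ (b - C a'' b) * (b'' - C a' b'') := H a' ha' b hb a'' ha'' b'' hb'' haa h3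
          _ ≤ (b - C a'' b) * (b' - C a' b') :=
              mul_le_mul_of_nonneg_left (g_mono hC ha' hb'' hb' hbb) (g_nonneg hC ha'' hb)
  · rcases le_total a a'' with h4 | h4
    · -- a' ≤ a ≤ a'' : maxes are a, a''
      rw [max_eq_left h1, max_eq_right h4]
      rcases le_total b' b with h2 | h2
      · rw [min_eq_right h2, min_eq_right (hbb.trans h2)]
        calc (b' - C a b') * (b'' - C a'' b'') = (b'' - C a'' b'') * (b' - C a b') := by ring
          _ ≤ (b'' - C a'' b'') * (b' - C a' b') :=
              mul_le_mul_of_nonneg_left (g_anti hC ha' ha hb' h1) (g_nonneg hC ha'' hb'')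
      · rcases le_total b'' b with h3 | h3
        · rw [min_eq_left h2, min_eq_right h3]
          calc (b - C a b) * (b'' - C a'' b'') = (b'' - C a'' b'') * (b - C a b) := by ring
            _ ≤ (b'' - C a'' b'') * (b' - C a' b') :=
                mul_le_mul_of_nonneg_left
                  ((g_anti hC ha' ha hb h1).trans (g_mono hC ha' hb hb' h2))
                  (g_nonneg hC ha'' hb'')
        · rw [min_eq_left h2, min_eq_left h3]
          calc (b - C a b) * (b'' - C a'' b'')
              ≤ (b - C a'' b) * (b'' - C a b'') := H a ha b hb a'' ha'' b'' hb'' h4 h3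
            _ ≤ (b - C a'' b) * (b' - C a' b') :=
                mul_le_mul_of_nonneg_left
                  ((g_anti hC ha' ha hb'' h1).trans (g_mono hC ha' hb'' hb' hbb))
                  (g_nonneg hC ha'' hb)
    · -- a'' ≤ a : maxes are a, a
      rw [max_eq_left h1, max_eq_left h4]
      rcases le_total b b'' with h3 | h3
      · -- b ≤ b'' : mins = b, b
        rw [min_eq_left (h3.trans hbb), min_eq_left h3]
        exact mul_le_mul_of_nonneg_left
          ((g_anti hC ha' ha'' hb'' haa).trans (g_mono hC ha' hb'' hb' hbb))
          (g_nonneg hC ha (by constructor <;> [exact hb.1; exact hb.2]))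
      · -- b'' ≤ b : min b b'' = b''
        rw [min_eq_right h3]
        have hmbb' : min b b' ∈ Icc (0:ℝ) 1 := ⟨le_min hb.1 hb'.1, (min_le_left _ _).trans hb.2⟩
        have h5 : b'' ≤ min b b' := le_min h3 hbb
        calc (min b b' - C a (min b b')) * (b'' - C a'' b'')
            = (b'' - C a'' b'') * (min b b' - C a (min b b')) := by ring
          _ ≤ (b'' - C a b'') * (min b b' - C a'' (min b b')) :=
              H a'' ha'' b'' hb'' a ha (min b b') hmbb' h4 h5
          _ ≤ (b'' - C a b'') * (b' - C a' b') := by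
              apply mul_le_mul_of_nonneg_left _ (g_nonneg hC ha hb'')
              exact (g_anti hC ha' ha'' hmbb' haa).trans
                (g_mono hC ha' hmbb' hb' (min_le_right _ _))


section Meas

variable {C : ℝ → ℝ → ℝ} {μ : Measure (ℝ × ℝ)} [IsProbabilityMeasure μ]

lemma meas_eq_of_diffs_null {A B : Set (ℝ × ℝ)} (h1 : μ (A \ B) = 0) (h2 : μ (B \ A) = 0) :
    μ A = μ B := by
  apply le_antisymm
  · calc μ A ≤ μ (B ∪ A \ B) := measure_mono (fun p hp => by
        by_cases h : p ∈ B
        · exact Or.inl h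
        · exact Or.inr ⟨hp, h⟩)
      _ ≤ μ B + μ (A \ B) := measure_union_le _ _
      _ = μ B := by rw [h1, add_zero]
  · calc μ B ≤ μ (A ∪ B \ A) := measure_mono (fun p hp => by
        by_cases h : p ∈ A
        · exact Or.inl h
        · exact Or.inr ⟨hp, h⟩)
      _ ≤ μ A + μ (B \ A) := measure_union_le _ _
      _ = μ A := by rw [h2, add_zero]

lemma null_compl (hsupp : μ (Icc (0:ℝ) 1 ×ˢ Icc (0:ℝ) 1) = 1) :
    μ ((Icc (0:ℝ) 1 ×ˢ Icc (0:ℝ) 1)ᶜ) = 0 := by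
  rw [measure_compl (measurableSet_Icc.prod measurableSet_Icc) (measure_ne_top μ _), hsupp,
    measure_univ, tsub_self]

/-- L1 -/
lemma meas_le_le (hC : IsCopula2 C) (hsupp : μ (Icc (0:ℝ) 1 ×ˢ Icc (0:ℝ) 1) = 1)
    (hμC : ∀ u ∈ Icc (0:ℝ) 1, ∀ v ∈ Icc (0:ℝ) 1,
      μ (Icc 0 u ×ˢ Icc 0 v) = ENNReal.ofReal (C u v))
    {x y : ℝ} (hx : x ∈ Icc (0:ℝ) 1) (hy : y ∈ Icc (0:ℝ) 1) :
    μ {p : ℝ × ℝ | p.1 ≤ x ∧ p.2 ≤ y} = ENNReal.ofReal (C x y) := by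
  set K := Icc (0:ℝ) 1 ×ˢ Icc (0:ℝ) 1 with hK
  have hKm : MeasurableSet K := measurableSet_Icc.prod measurableSet_Icc
  have hinter : {p : ℝ × ℝ | p.1 ≤ x ∧ p.2 ≤ y} ∩ K = Icc 0 x ×ˢ Icc 0 y := by
    ext ⟨p1, p2⟩
    simp only [hK, mem_inter_iff, mem_setOf_eq, mem_prod, mem_Icc]
    constructor
    · rintro ⟨⟨h1, h2⟩, ⟨h3, _⟩, h5, _⟩
      exact ⟨⟨h3, h1⟩, h5, h2⟩
    · rintro ⟨⟨h3, h1⟩, h5, h2⟩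
      exact ⟨⟨h1, h2⟩, ⟨h3, h1.trans hx.2⟩, h5, h2.trans hy.2⟩
  have hdn : μ ({p : ℝ × ℝ | p.1 ≤ x ∧ p.2 ≤ y} \ K) = 0 :=
    measure_mono_null (diff_subset_compl _ _) (null_compl hsupp)
  rw [← measure_inter_add_diff _ hKm, hdn, add_zero, hinter, hμC x hx y hy]

/-- L2 -/
lemma meas_snd_le (hC : IsCopula2 C) (hsupp : μ (Icc (0:ℝ) 1 ×ˢ Icc (0:ℝ) 1) = 1)
    (hμC : ∀ u ∈ Icc (0:ℝ) 1, ∀ v ∈ Icc (0:ℝ) 1,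
      μ (Icc 0 u ×ˢ Icc 0 v) = ENNReal.ofReal (C u v))
    {y : ℝ} (hy : y ∈ Icc (0:ℝ) 1) :
    μ {p : ℝ × ℝ | p.2 ≤ y} = ENNReal.ofReal y := by
  have h1 : μ {p : ℝ × ℝ | p.2 ≤ y} = μ {p : ℝ × ℝ | p.1 ≤ 1 ∧ p.2 ≤ y} := by
    apply meas_eq_of_diffs_null
    · apply measure_mono_null _ (null_compl hsupp)
      rintro ⟨p1, p2⟩ ⟨h1, h2⟩
      simp only [mem_setOf_eq] at h1 h2
      simp only [mem_compl_iff, mem_prod, mem_Icc, not_and, not_le]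
      intro hmem
      exfalso
      exact h2 ⟨hmem.2, h1⟩
    · have : ({p : ℝ × ℝ | p.1 ≤ 1 ∧ p.2 ≤ y} \ {p : ℝ × ℝ | p.2 ≤ y}) = ∅ := by
        ext p
        simp only [mem_diff, mem_setOf_eq, mem_empty_iff_false, iff_false, not_and, not_not]
        tauto
      rw [this, measure_empty]
  rw [h1, meas_le_le hC hsupp hμC (by simp) hy, hC.margin_right y hy]

/-- L3 -/
lemma meas_gt_le (hC : IsCopula2 C) (hsupp : μ (Icc (0:ℝ) 1 ×ˢ Icc (0:ℝ) 1) = 1)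
    (hμC : ∀ u ∈ Icc (0:ℝ) 1, ∀ v ∈ Icc (0:ℝ) 1,
      μ (Icc 0 u ×ˢ Icc 0 v) = ENNReal.ofReal (C u v))
    {x y : ℝ} (hx : x ∈ Icc (0:ℝ) 1) (hy : y ∈ Icc (0:ℝ) 1) :
    μ {p : ℝ × ℝ | x < p.1 ∧ p.2 ≤ y} = ENNReal.ofReal (y - C x y) := by
  have hunion : {p : ℝ × ℝ | p.1 ≤ x ∧ p.2 ≤ y} ∪ {p : ℝ × ℝ | x < p.1 ∧ p.2 ≤ y}
      = {p : ℝ × ℝ | p.2 ≤ y} := by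
    ext p
    simp only [mem_union, mem_setOf_eq]
    constructor
    · rintro (⟨_, h⟩ | ⟨_, h⟩) <;> exact h
    · intro h
      rcases le_or_gt p.1 x with h' | h'
      · exact Or.inl ⟨h', h⟩
      · exact Or.inr ⟨h', h⟩
  have hdisj : Disjoint {p : ℝ × ℝ | p.1 ≤ x ∧ p.2 ≤ y} {p : ℝ × ℝ | x < p.1 ∧ p.2 ≤ y} := by
    rw [Set.disjoint_left]
    rintro p ⟨h1, _⟩ ⟨h2, _⟩
    exact absurd h1 (not_le.mpr h2)
  have hm2 : MeasurableSet {p : ℝ × ℝ | x < p.1 ∧ p.2 ≤ y} :=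
    (measurableSet_lt measurable_const measurable_fst).inter
      (measurableSet_le measurable_snd measurable_const)
  have key : μ {p : ℝ × ℝ | p.2 ≤ y}
      = ENNReal.ofReal (C x y) + μ {p : ℝ × ℝ | x < p.1 ∧ p.2 ≤ y} := by
    rw [← hunion, measure_union hdisj hm2, meas_le_le hC hsupp hμC hx hy]
  rw [meas_snd_le hC hsupp hμC hy] at key
  have hsplit : ENNReal.ofReal y = ENNReal.ofReal (C x y) + ENNReal.ofReal (y - C x y) := by
    rw [← ENNReal.ofReal_add (cop_nonneg hC hx hy) (by linarith [cop_le hC hx hy])]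
    ring_nf
  rw [hsplit] at key
  exact (ENNReal.add_right_inj ENNReal.ofReal_ne_top).mp key.symm |>.symm ▸ rfl

/-- L4 : atoms of the second marginal are null -/
lemma meas_atom (hC : IsCopula2 C) (hsupp : μ (Icc (0:ℝ) 1 ×ˢ Icc (0:ℝ) 1) = 1)
    (hμC : ∀ u ∈ Icc (0:ℝ) 1, ∀ v ∈ Icc (0:ℝ) 1,
      μ (Icc 0 u ×ˢ Icc 0 v) = ENNReal.ofReal (C u v))
    (y : ℝ) : μ {p : ℝ × ℝ | p.2 = y} = 0 := by
  rcases le_or_gt y 0 with hy0 | hy0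
  · apply measure_mono_null (t := {p : ℝ × ℝ | p.2 ≤ 0})
    · intro p hp; simp only [mem_setOf_eq] at *; linarith
    · have := meas_snd_le hC hsupp hμC (show (0:ℝ) ∈ Icc (0:ℝ) 1 by simp)
      rw [this, ENNReal.ofReal_zero]
  rcases le_or_gt y 1 with hy1 | hy1
  · -- 0 < y ≤ 1
    apply le_antisymm _ zero_le
    apply ENNReal.le_of_forall_pos_le_add
    intro ε hε _
    rw [zero_add]
    have hεr : (0:ℝ) < ε := hε
    set y' := max 0 (y - ε) with hy'
    have hy'mem : y' ∈ Icc (0:ℝ) 1 := ⟨le_max_left _ _, max_le zero_le_one (by linarith)⟩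
    have hy'lt : y' < y := max_lt hy0 (by linarith)
    have hsub : {p : ℝ × ℝ | p.2 = y} ⊆ {p : ℝ × ℝ | p.2 ≤ y} \ {p : ℝ × ℝ | p.2 ≤ y'} := by
      intro p hp
      simp only [mem_setOf_eq] at hp
      exact ⟨by simp only [mem_setOf_eq]; linarith,
        by simp only [mem_setOf_eq, not_le]; linarith⟩
    have hdiff : μ ({p : ℝ × ℝ | p.2 ≤ y} \ {p : ℝ × ℝ | p.2 ≤ y'})
        = ENNReal.ofReal y - ENNReal.ofReal y' := by
      rw [measure_diff (fun p hp => by simp only [mem_setOf_eq] at *; linarith)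
        ((measurableSet_le measurable_snd measurable_const).nullMeasurableSet)
        (measure_ne_top μ _), meas_snd_le hC hsupp hμC hy'mem,
        meas_snd_le hC hsupp hμC ⟨hy0.le, hy1⟩]
    calc μ {p : ℝ × ℝ | p.2 = y} ≤ μ ({p : ℝ × ℝ | p.2 ≤ y} \ {p : ℝ × ℝ | p.2 ≤ y'}) :=
        measure_mono hsub
      _ = ENNReal.ofReal y - ENNReal.ofReal y' := hdiff
      _ = ENNReal.ofReal (y - y') := (ENNReal.ofReal_sub y hy'mem.1).symm
      _ ≤ ENNReal.ofReal ε := ENNReal.ofReal_le_ofReal (by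
          have : y - ε ≤ y' := le_max_right _ _
          linarith)
      _ = (ε : ENNReal) := ENNReal.ofReal_coe_nnreal
  · apply measure_mono_null _ (null_compl hsupp)
    intro p hp
    simp only [mem_setOf_eq] at hp
    simp only [mem_compl_iff, mem_prod, mem_Icc, not_and]
    intro _ _
    rw [hp]
    exact not_le.mpr hy1

/-- L5 -/
lemma meas_gt_lt (hC : IsCopula2 C) (hsupp : μ (Icc (0:ℝ) 1 ×ˢ Icc (0:ℝ) 1) = 1)
    (hμC : ∀ u ∈ Icc (0:ℝ) 1, ∀ v ∈ Icc (0:ℝ) 1,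
      μ (Icc 0 u ×ˢ Icc 0 v) = ENNReal.ofReal (C u v))
    {x y : ℝ} (hx : x ∈ Icc (0:ℝ) 1) (hy : y ∈ Icc (0:ℝ) 1) :
    μ {p : ℝ × ℝ | x < p.1 ∧ p.2 < y} = ENNReal.ofReal (y - C x y) := by
  rw [← meas_gt_le hC hsupp hμC hx hy]
  apply meas_eq_of_diffs_null
  · have : ({p : ℝ × ℝ | x < p.1 ∧ p.2 < y} \ {p : ℝ × ℝ | x < p.1 ∧ p.2 ≤ y}) = ∅ := by
      ext p
      simp only [mem_diff, mem_setOf_eq, mem_empty_iff_false, iff_false, not_and]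
      rintro ⟨h1, h2⟩ h3
      exact h3 h1 h2.le
    rw [this, measure_empty]
  · apply measure_mono_null (t := {p : ℝ × ℝ | p.2 = y}) _ (meas_atom hC hsupp hμC y)
    intro p hp
    have h1 : x < p.1 := hp.1.1
    have h2 : p.2 ≤ y := hp.1.2
    have h3 : ¬(x < p.1 ∧ p.2 < y) := hp.2
    show p.2 = y
    by_contra hne
    exact h3 ⟨h1, lt_of_le_of_ne h2 hne⟩

/-- clamp -/
noncomputable def cl (t : ℝ) : ℝ := max 0 (min t 1)

lemma cl_mem (t : ℝ) : cl t ∈ Icc (0:ℝ) 1 :=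
  ⟨le_max_left _ _, max_le zero_le_one (min_le_right _ _)⟩

lemma cl_eq {t : ℝ} (ht : t ∈ Icc (0:ℝ) 1) : cl t = t := by
  rw [cl, min_eq_left ht.2, max_eq_right ht.1]

lemma cl_mono {s t : ℝ} (h : s ≤ t) : cl s ≤ cl t :=
  max_le_max le_rfl (min_le_min h le_rfl)

lemma cl_max (s t : ℝ) : cl (max s t) = max (cl s) (cl t) := by
  rcases le_total s t with h | h
  · rw [max_eq_right h, max_eq_right (cl_mono h)]
  · rw [max_eq_left h, max_eq_left (cl_mono h)]

lemma cl_min (s t : ℝ) : cl (min s t) = min (cl s) (cl t) := by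
  rcases le_total s t with h | h
  · rw [min_eq_left h, min_eq_left (cl_mono h)]
  · rw [min_eq_right h, min_eq_right (cl_mono h)]

/-- the null frame -/
lemma null_frame (hC : IsCopula2 C) (hsupp : μ (Icc (0:ℝ) 1 ×ˢ Icc (0:ℝ) 1) = 1)
    (hμC : ∀ u ∈ Icc (0:ℝ) 1, ∀ v ∈ Icc (0:ℝ) 1,
      μ (Icc 0 u ×ˢ Icc 0 v) = ENNReal.ofReal (C u v)) :
    μ {p : ℝ × ℝ | p.1 ≤ 0 ∨ 1 < p.1 ∨ p.2 ≤ 0 ∨ 1 ≤ p.2} = 0 := by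
  have h1 : μ {p : ℝ × ℝ | p.1 ≤ 0} = 0 := by
    have heq : μ {p : ℝ × ℝ | p.1 ≤ 0} = μ {p : ℝ × ℝ | p.1 ≤ 0 ∧ p.2 ≤ 1} := by
      apply meas_eq_of_diffs_null
      · apply measure_mono_null _ (null_compl hsupp)
        rintro p ⟨hp1, hp2⟩
        simp only [mem_setOf_eq, not_and, not_le] at hp1 hp2
        simp only [mem_compl_iff, mem_prod, mem_Icc]
        rintro ⟨-, -, h⟩
        exact absurd h (not_le.mpr (hp2 hp1))
      · have : ({p : ℝ × ℝ | p.1 ≤ 0 ∧ p.2 ≤ 1} \ {p : ℝ × ℝ | p.1 ≤ 0}) = ∅ := by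
          ext p; simp only [mem_diff, mem_setOf_eq, mem_empty_iff_false, iff_false, not_and,
            not_not]; tauto
        rw [this, measure_empty]
    rw [heq, meas_le_le hC hsupp hμC (by simp) (by simp), hC.grounded_left 1 (by simp),
      ENNReal.ofReal_zero]
  have h2 : μ {p : ℝ × ℝ | 1 < p.1} = 0 := by
    apply measure_mono_null _ (null_compl hsupp)
    intro p hp
    simp only [mem_setOf_eq] at hp
    simp only [mem_compl_iff, mem_prod, mem_Icc]
    rintro ⟨⟨-, h⟩, -⟩
    exact absurd h (not_le.mpr hp)
  have h3 : μ {p : ℝ × ℝ | p.2 ≤ 0} = 0 := by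
    have := meas_snd_le hC hsupp hμC (show (0:ℝ) ∈ Icc (0:ℝ) 1 by simp)
    rw [this, ENNReal.ofReal_zero]
  have h4 : μ {p : ℝ × ℝ | 1 ≤ p.2} = 0 := by
    have hsub : {p : ℝ × ℝ | 1 ≤ p.2} ⊆ {p : ℝ × ℝ | p.2 = 1} ∪ {p : ℝ × ℝ | 1 < p.2} := by
      intro p hp
      simp only [mem_setOf_eq] at hp
      simp only [mem_union, mem_setOf_eq]
      rcases eq_or_lt_of_le hp with h | h
      · exact Or.inl h.symm
      · exact Or.inr h
    apply measure_mono_null hsub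
    apply measure_union_null (meas_atom hC hsupp hμC 1)
    apply measure_mono_null _ (null_compl hsupp)
    intro p hp
    simp only [mem_setOf_eq] at hp
    simp only [mem_compl_iff, mem_prod, mem_Icc]
    rintro ⟨-, -, h⟩
    exact absurd h (not_le.mpr hp)
  have hsub : {p : ℝ × ℝ | p.1 ≤ 0 ∨ 1 < p.1 ∨ p.2 ≤ 0 ∨ 1 ≤ p.2} ⊆
      ({p : ℝ × ℝ | p.1 ≤ 0} ∪ {p : ℝ × ℝ | 1 < p.1}) ∪
      ({p : ℝ × ℝ | p.2 ≤ 0} ∪ {p : ℝ × ℝ | 1 ≤ p.2}) := by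
    intro p hp
    simp only [mem_setOf_eq] at hp
    simp only [mem_union, mem_setOf_eq]
    rcases hp with h | h | h | h
    · exact Or.inl (Or.inl h)
    · exact Or.inl (Or.inr h)
    · exact Or.inr (Or.inl h)
    · exact Or.inr (Or.inr h)
  exact measure_mono_null hsub
    (measure_union_null (measure_union_null h1 h2) (measure_union_null h3 h4))

/-- L6: master lemma -/
lemma meas_master (hC : IsCopula2 C) (hsupp : μ (Icc (0:ℝ) 1 ×ˢ Icc (0:ℝ) 1) = 1)
    (hμC : ∀ u ∈ Icc (0:ℝ) 1, ∀ v ∈ Icc (0:ℝ) 1,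
      μ (Icc 0 u ×ˢ Icc 0 v) = ENNReal.ofReal (C u v))
    (x y : ℝ) :
    μ {p : ℝ × ℝ | x < p.1 ∧ p.2 < y} = ENNReal.ofReal (cl y - C (cl x) (cl y)) := by
  have hstep : μ {p : ℝ × ℝ | x < p.1 ∧ p.2 < y}
      = μ {p : ℝ × ℝ | cl x < p.1 ∧ p.2 < cl y} := by
    apply meas_eq_of_diffs_null <;>
      [apply measure_mono_null _ (null_frame hC hsupp hμC);
       apply measure_mono_null _ (null_frame hC hsupp hμC)]
    · rintro p ⟨⟨hx1, hy1⟩, hmem⟩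
      simp only [mem_setOf_eq, not_and, not_lt] at hmem hx1 hy1 ⊢
      by_cases h : cl x < p.1
      · -- then cl y ≤ p.2 < y, so y > 1 hence 1 ≤ p.2
        have h2 := hmem h
        have h3 : min y 1 ≤ p.2 := le_trans (le_max_right 0 (min y 1)) h2
        rcases le_total y 1 with h4 | h4
        · exfalso; rw [min_eq_left h4] at h3; linarith
        · rw [min_eq_right h4] at h3; exact Or.inr (Or.inr (Or.inr h3))
      · push_neg at h
        rcases le_or_gt p.1 0 with h5 | h5
        · exact Or.inl h5
        · exfalso
          have h6 : p.1 ≤ min x 1 := by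
            rcases (le_max_iff.mp h) with h7 | h7
            · linarith
            · exact h7
          exact absurd hx1 (not_lt.mpr ((h6.trans (min_le_left x 1))))
    · rintro p ⟨⟨hx1, hy1⟩, hmem⟩
      simp only [mem_setOf_eq, not_and, not_lt] at hmem ⊢
      by_cases h : x < p.1
      · -- then y ≤ p.2 < cl y, needs y < 0, so p.2 < 0
        have h2 := hmem h
        rcases lt_max_iff.mp hy1 with h3 | h3
        · exact Or.inr (Or.inr (Or.inl h3.le))
        · exfalso; exact absurd h2 (not_le.mpr (h3.trans_le (min_le_left y 1)))
      · push_neg at h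
        -- cl x < p.1 ≤ x : needs x > 1, so 1 < p.1
        rcases max_lt_iff.mp hx1 with ⟨h4, h5⟩
        rcases le_total x 1 with h6 | h6
        · exfalso; rw [min_eq_left h6] at h5; linarith
        · rw [min_eq_right h6] at h5; exact Or.inr (Or.inl h5)
  rw [hstep, meas_gt_lt hC hsupp hμC (cl_mem x) (cl_mem y)]

end Meas
end CopAux

open CopAux

theorem copula_I_1_neg1_iff (C : ℝ → ℝ → ℝ) (hC : IsCopula2 C)
    (μ : Measure (ℝ × ℝ)) [IsProbabilityMeasure μ]
    (hsupp : μ (Icc (0:ℝ) 1 ×ˢ Icc (0:ℝ) 1) = 1)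
    (hμC : ∀ u ∈ Icc (0:ℝ) 1, ∀ v ∈ Icc (0:ℝ) 1,
      μ (Icc 0 u ×ˢ Icc 0 v) = ENNReal.ofReal (C u v)) :
    IsIncDir2 μ 1 (-1) ↔
      ∀ u ∈ Icc (0:ℝ) 1, ∀ v ∈ Icc (0:ℝ) 1, ∀ u' ∈ Icc (0:ℝ) 1, ∀ v' ∈ Icc (0:ℝ) 1,
        u ≤ u' → v ≤ v' →
        (v - C u v) * (v' - C u' v') ≤ (v - C u' v) * (v' - C u v') := by
  constructor
  · intro hI u hu v hv u' hu' v' hv' huu hvv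
    have h := hI u (-v) u (-v') u' (-v') huu le_rfl
    have E1 : {p : ℝ × ℝ | ((1:ℝ) * p.1 > u ∧ (-1:ℝ) * p.2 > -v) ∧
        ((1:ℝ) * p.1 > u ∧ (-1:ℝ) * p.2 > -v')} = {p : ℝ × ℝ | u < p.1 ∧ p.2 < v} := by
      ext p
      simp only [mem_setOf_eq, one_mul, neg_mul, gt_iff_lt]
      constructor
      · rintro ⟨⟨a, b⟩, -, -⟩
        exact ⟨a, by linarith⟩
      · rintro ⟨a, b⟩
        exact ⟨⟨a, by linarith⟩, a, by linarith⟩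
    have E2 : {p : ℝ × ℝ | (1:ℝ) * p.1 > u' ∧ (-1:ℝ) * p.2 > -v'}
        = {p : ℝ × ℝ | u' < p.1 ∧ p.2 < v'} := by
      ext p
      simp only [mem_setOf_eq, one_mul, neg_mul, gt_iff_lt]
      constructor <;> rintro ⟨a, b⟩ <;> exact ⟨a, by linarith⟩
    have E3 : {p : ℝ × ℝ | ((1:ℝ) * p.1 > u ∧ (-1:ℝ) * p.2 > -v) ∧
        ((1:ℝ) * p.1 > u' ∧ (-1:ℝ) * p.2 > -v')} = {p : ℝ × ℝ | u' < p.1 ∧ p.2 < v} := by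
      ext p
      simp only [mem_setOf_eq, one_mul, neg_mul, gt_iff_lt]
      constructor
      · rintro ⟨⟨-, b⟩, c, -⟩
        exact ⟨c, by linarith⟩
      · rintro ⟨a, b⟩
        exact ⟨⟨by linarith, by linarith⟩, a, by linarith⟩
    have E4 : {p : ℝ × ℝ | (1:ℝ) * p.1 > u ∧ (-1:ℝ) * p.2 > -v'}
        = {p : ℝ × ℝ | u < p.1 ∧ p.2 < v'} := by
      ext p
      simp only [mem_setOf_eq, one_mul, neg_mul, gt_iff_lt]
      constructor <;> rintro ⟨a, b⟩ <;> exact ⟨a, by linarith⟩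
    rw [E1, E2, E3, E4, meas_gt_lt hC hsupp hμC hu hv, meas_gt_lt hC hsupp hμC hu' hv',
      meas_gt_lt hC hsupp hμC hu' hv, meas_gt_lt hC hsupp hμC hu hv'] at h
    rw [← ENNReal.ofReal_mul (g_nonneg hC hu hv), ← ENNReal.ofReal_mul (g_nonneg hC hu' hv)] at h
    exact (ENNReal.ofReal_le_ofReal_iff
      (mul_nonneg (g_nonneg hC hu' hv) (g_nonneg hC hu hv'))).mp h
  · intro hH x₁ x₂ x₁' x₂' x₁'' x₂'' h1 h2
    have T1 : ∀ s t s' t' : ℝ, {p : ℝ × ℝ | ((1:ℝ) * p.1 > s ∧ (-1:ℝ) * p.2 > t) ∧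
        ((1:ℝ) * p.1 > s' ∧ (-1:ℝ) * p.2 > t')}
        = {p : ℝ × ℝ | max s s' < p.1 ∧ p.2 < min (-t) (-t')} := by
      intro s t s' t'
      ext p
      simp only [mem_setOf_eq, one_mul, neg_mul, gt_iff_lt, max_lt_iff, lt_min_iff]
      constructor
      · rintro ⟨⟨a, b⟩, c, d⟩
        exact ⟨⟨a, c⟩, by linarith, by linarith⟩
      · rintro ⟨⟨a, c⟩, b, d⟩
        exact ⟨⟨a, by linarith⟩, c, by linarith⟩
    have T2 : ∀ s t : ℝ, {p : ℝ × ℝ | (1:ℝ) * p.1 > s ∧ (-1:ℝ) * p.2 > t}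
        = {p : ℝ × ℝ | s < p.1 ∧ p.2 < -t} := by
      intro s t
      ext p
      simp only [mem_setOf_eq, one_mul, neg_mul, gt_iff_lt]
      constructor <;> rintro ⟨a, b⟩ <;> exact ⟨a, by linarith⟩
    rw [T1, T2, T1, T2, meas_master hC hsupp hμC, meas_master hC hsupp hμC,
      meas_master hC hsupp hμC, meas_master hC hsupp hμC, cl_max, cl_min, cl_max, cl_min]
    set a := cl x₁
    set a' := cl x₁'
    set a'' := cl x₁''
    set b := cl (-x₂)
    set b' := cl (-x₂')
    set b'' := cl (-x₂'')
    have ha : a ∈ Icc (0:ℝ) 1 := cl_mem _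
    have ha' : a' ∈ Icc (0:ℝ) 1 := cl_mem _
    have ha'' : a'' ∈ Icc (0:ℝ) 1 := cl_mem _
    have hb : b ∈ Icc (0:ℝ) 1 := cl_mem _
    have hb' : b' ∈ Icc (0:ℝ) 1 := cl_mem _
    have hb'' : b'' ∈ Icc (0:ℝ) 1 := cl_mem _
    have hmax1 : max a a' ∈ Icc (0:ℝ) 1 := ⟨le_trans ha.1 (le_max_left _ _), max_le ha.2 ha'.2⟩
    have hmax2 : max a a'' ∈ Icc (0:ℝ) 1 := ⟨le_trans ha.1 (le_max_left _ _), max_le ha.2 ha''.2⟩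
    have hmin1 : min b b' ∈ Icc (0:ℝ) 1 := ⟨le_min hb.1 hb'.1, le_trans (min_le_left _ _) hb.2⟩
    have hmin2 : min b b'' ∈ Icc (0:ℝ) 1 := ⟨le_min hb.1 hb''.1, le_trans (min_le_left _ _) hb.2⟩
    rw [← ENNReal.ofReal_mul (g_nonneg hC hmax1 hmin1),
      ← ENNReal.ofReal_mul (g_nonneg hC hmax2 hmin2)]
    exact ENNReal.ofReal_le_ofReal
      (keyIneq hC hH ha ha' ha'' hb hb' hb''
        (cl_mono h1) (cl_mono (neg_le_neg h2)))
end

section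
/- Let C be a 2-copula with survival copula Ĉ(u,v) = u + v - 1 + C(1-u,1-v), and let μ_C be the probability measure on [0,1]² induced by C. Then C is I(1,1) if, and only if, Ĉ(u,v)·Ĉ(u',v') ≥ Ĉ(u,v')·Ĉ(u',v) for all u, v, u', v' in [0,1] with u ≤ u' and v ≤ v'. -/
open MeasureTheory Set

/-- clamp to [0,1] -/
private def cl (x : ℝ) : ℝ := min (max x 0) 1

private lemma cl_mem (x : ℝ) : cl x ∈ Icc (0:ℝ) 1 :=
  ⟨le_min (le_max_right _ _) zero_le_one, min_le_right _ _⟩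

private lemma cl_mono : Monotone cl :=
  fun _ _ h => min_le_min (max_le_max h le_rfl) le_rfl

private lemma le_cl {x : ℝ} (h : x ≤ 1) : x ≤ cl x :=
  le_min (le_max_left _ _) h

private lemma one_le_cl {x : ℝ} (h : 1 ≤ x) : (1:ℝ) ≤ cl x :=
  le_min (le_trans h (le_max_left _ _)) le_rfl

private lemma cl_of_mem {x : ℝ} (h : x ∈ Icc (0:ℝ) 1) : cl x = x := by
  rw [cl, max_eq_left h.1, min_eq_left h.2]

private lemma cl_max (a b : ℝ) : cl (max a b) = max (cl a) (cl b) :=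
  cl_mono.map_max

private lemma one_sub_max (p q : ℝ) : 1 - max p q = min (1-p) (1-q) := by
  rcases le_total p q with h | h
  · rw [max_eq_right h, min_eq_right (by linarith)]
  · rw [max_eq_left h, min_eq_left (by linarith)]

private lemma one_sub_cl_mem (x : ℝ) : 1 - cl x ∈ Icc (0:ℝ) 1 :=
  ⟨by linarith [(cl_mem x).2], by linarith [(cl_mem x).1]⟩

private lemma memI_min {a b : ℝ} (ha : a ∈ Icc (0:ℝ) 1) (hb : b ∈ Icc (0:ℝ) 1) :
    min a b ∈ Icc (0:ℝ) 1 := ⟨le_min ha.1 hb.1, min_le_of_left_le ha.2⟩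

private lemma memI_max {a b : ℝ} (ha : a ∈ Icc (0:ℝ) 1) (hb : b ∈ Icc (0:ℝ) 1) :
    max a b ∈ Icc (0:ℝ) 1 := ⟨le_max_of_le_left ha.1, max_le ha.2 hb.2⟩

private def Dfun (C : ℝ → ℝ → ℝ) (u v : ℝ) : ℝ := u + v - 1 + C (1 - u) (1 - v)

private lemma C_nonneg {C : ℝ → ℝ → ℝ} (hC : IsCopula2 C) {u v : ℝ}
    (hu : u ∈ Icc (0:ℝ) 1) (hv : v ∈ Icc (0:ℝ) 1) : 0 ≤ C u v := by
  have h := hC.twoIncreasing 0 u 0 v ⟨le_rfl, zero_le_one⟩ hu ⟨le_rfl, zero_le_one⟩ hv hu.1 hv.1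
  rw [hC.grounded_right u hu, hC.grounded_left v hv, hC.grounded_left 0 ⟨le_rfl, zero_le_one⟩] at h
  linarith

private lemma D_nonneg {C : ℝ → ℝ → ℝ} (hC : IsCopula2 C) {u v : ℝ}
    (hu : u ∈ Icc (0:ℝ) 1) (hv : v ∈ Icc (0:ℝ) 1) : 0 ≤ Dfun C u v := by
  have h := hC.twoIncreasing (1-u) 1 (1-v) 1 ⟨by linarith [hu.2], by linarith [hu.1]⟩
    ⟨zero_le_one, le_rfl⟩ ⟨by linarith [hv.2], by linarith [hv.1]⟩ ⟨zero_le_one, le_rfl⟩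
    (by linarith [hu.1]) (by linarith [hv.1])
  have h1 := hC.margin_left (1-u) ⟨by linarith [hu.2], by linarith [hu.1]⟩
  have h2 := hC.margin_right (1-v) ⟨by linarith [hv.2], by linarith [hv.1]⟩
  have h3 := hC.margin_left 1 ⟨zero_le_one, le_rfl⟩
  simp only [Dfun]
  linarith

private lemma D_mono_left {C : ℝ → ℝ → ℝ} (hC : IsCopula2 C) {u u' v : ℝ}
    (hu : u ∈ Icc (0:ℝ) 1) (hu' : u' ∈ Icc (0:ℝ) 1) (hv : v ∈ Icc (0:ℝ) 1)
    (h : u ≤ u') : Dfun C u v ≤ Dfun C u' v := by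
  have h2 := hC.twoIncreasing (1-u') (1-u) (1-v) 1 ⟨by linarith [hu'.2], by linarith [hu'.1]⟩
    ⟨by linarith [hu.2], by linarith [hu.1]⟩ ⟨by linarith [hv.2], by linarith [hv.1]⟩
    ⟨zero_le_one, le_rfl⟩ (by linarith) (by linarith [hv.1])
  have m1 := hC.margin_left (1-u) ⟨by linarith [hu.2], by linarith [hu.1]⟩
  have m2 := hC.margin_left (1-u') ⟨by linarith [hu'.2], by linarith [hu'.1]⟩
  simp only [Dfun]
  linarith

private lemma D_mono_right {C : ℝ → ℝ → ℝ} (hC : IsCopula2 C) {u v v' : ℝ}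
    (hu : u ∈ Icc (0:ℝ) 1) (hv : v ∈ Icc (0:ℝ) 1) (hv' : v' ∈ Icc (0:ℝ) 1)
    (h : v ≤ v') : Dfun C u v ≤ Dfun C u v' := by
  have h2 := hC.twoIncreasing (1-u) 1 (1-v') (1-v) ⟨by linarith [hu.2], by linarith [hu.1]⟩
    ⟨zero_le_one, le_rfl⟩ ⟨by linarith [hv'.2], by linarith [hv'.1]⟩
    ⟨by linarith [hv.2], by linarith [hv.1]⟩ (by linarith [hu.1]) (by linarith)
  have m1 := hC.margin_right (1-v) ⟨by linarith [hv.2], by linarith [hv.1]⟩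
  have m2 := hC.margin_right (1-v') ⟨by linarith [hv'.2], by linarith [hv'.1]⟩
  simp only [Dfun]
  linarith

private lemma disj_left {a : ℝ} {K L : Set ℝ} :
    Disjoint (Icc (0:ℝ) a ×ˢ K) (Ioc a 1 ×ˢ L) := by
  rw [Set.disjoint_left]
  rintro ⟨p1, p2⟩ ⟨h1, _⟩ ⟨h2, _⟩
  exact absurd h1.2 (not_le.mpr h2.1)

private lemma disj_right {a : ℝ} {K L : Set ℝ} :
    Disjoint (K ×ˢ Icc (0:ℝ) a) (L ×ˢ Ioc a 1) := by
  rw [Set.disjoint_left]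
  rintro ⟨p1, p2⟩ ⟨_, h1⟩ ⟨_, h2⟩
  exact absurd h1.2 (not_le.mpr h2.1)

private lemma surv (C : ℝ → ℝ → ℝ) (hC : IsCopula2 C)
    (μ : Measure (ℝ × ℝ)) [IsProbabilityMeasure μ]
    (hsupp : μ (Icc (0:ℝ) 1 ×ˢ Icc (0:ℝ) 1) = 1)
    (hμC : ∀ u ∈ Icc (0:ℝ) 1, ∀ v ∈ Icc (0:ℝ) 1,
      μ (Icc 0 u ×ˢ Icc 0 v) = ENNReal.ofReal (C u v))
    (x y : ℝ) :
    μ {p : ℝ × ℝ | p.1 > x ∧ p.2 > y} = ENNReal.ofReal (Dfun C (1 - cl x) (1 - cl y)) := by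
  have hx' := cl_mem x
  have hy' := cl_mem y
  have hset : {p : ℝ × ℝ | p.1 > x ∧ p.2 > y} = Ioi x ×ˢ Ioi y := by
    ext p; simp [Set.mem_prod]
  have hzero1 : μ (Icc (0:ℝ) 0 ×ˢ Icc (0:ℝ) 1) = 0 := by
    rw [hμC 0 ⟨le_rfl, zero_le_one⟩ 1 ⟨zero_le_one, le_rfl⟩,
      hC.grounded_left 1 ⟨zero_le_one, le_rfl⟩]; simp
  have hzero2 : μ (Icc (0:ℝ) 1 ×ˢ Icc (0:ℝ) 0) = 0 := by
    rw [hμC 1 ⟨zero_le_one, le_rfl⟩ 0 ⟨le_rfl, zero_le_one⟩,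
      hC.grounded_right 1 ⟨zero_le_one, le_rfl⟩]; simp
  have hSc : μ ((Icc (0:ℝ) 1 ×ˢ Icc (0:ℝ) 1)ᶜ) = 0 := by
    rw [measure_compl (measurableSet_Icc.prod measurableSet_Icc) (measure_ne_top _ _),
      hsupp, measure_univ, tsub_self]
  -- step A : reduce to the Ioc product
  have hstepA : μ (Ioi x ×ˢ Ioi y) = μ (Ioc (cl x) 1 ×ˢ Ioc (cl y) 1) := by
    apply le_antisymm
    · have hsub : Ioi x ×ˢ Ioi y ⊆ (Ioc (cl x) 1 ×ˢ Ioc (cl y) 1) ∪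
          ((Icc (0:ℝ) 1 ×ˢ Icc (0:ℝ) 1)ᶜ ∪
            (Icc (0:ℝ) 0 ×ˢ Icc (0:ℝ) 1 ∪ Icc (0:ℝ) 1 ×ˢ Icc (0:ℝ) 0)) := by
        rintro ⟨p1, p2⟩ ⟨h1, h2⟩
        simp only [Set.mem_prod, mem_Ioi, mem_Ioc, mem_Icc, Set.mem_union,
          Set.mem_compl_iff] at *
        by_cases hS : (0 ≤ p1 ∧ p1 ≤ 1) ∧ 0 ≤ p2 ∧ p2 ≤ 1
        · rcases eq_or_lt_of_le hS.1.1 with he1 | hp1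
          · exact Or.inr (Or.inr (Or.inl ⟨⟨he1.le, he1.ge⟩, hS.2⟩))
          · rcases eq_or_lt_of_le hS.2.1 with he2 | hp2
            · exact Or.inr (Or.inr (Or.inr ⟨hS.1, he2.le, he2.ge⟩))
            · refine Or.inl ⟨⟨?_, hS.1.2⟩, ⟨?_, hS.2.2⟩⟩
              · exact lt_of_le_of_lt (min_le_left _ _) (max_lt h1 hp1)
              · exact lt_of_le_of_lt (min_le_left _ _) (max_lt h2 hp2)
        · exact Or.inr (Or.inl hS)
      calc μ (Ioi x ×ˢ Ioi y) ≤ μ _ := measure_mono hsub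
        _ ≤ μ (Ioc (cl x) 1 ×ˢ Ioc (cl y) 1) + μ _ := measure_union_le _ _
        _ = μ (Ioc (cl x) 1 ×ˢ Ioc (cl y) 1) := by
            rw [measure_union_null hSc (measure_union_null hzero1 hzero2), add_zero]
    · apply measure_mono
      rintro ⟨p1, p2⟩ ⟨⟨h1, h2⟩, ⟨h3, h4⟩⟩
      constructor
      · show x < p1
        rcases le_total x 1 with h | h
        · have := le_cl h; linarith
        · have := one_le_cl h; linarith
      · show y < p2
        rcases le_total y 1 with h | h
        · have := le_cl h; linarith
        · have := one_le_cl h; linarith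
  -- step B : compute the measure of the Ioc product
  have e1 : μ (Icc (0:ℝ) (cl x) ×ˢ Icc (0:ℝ) 1) + μ (Ioc (cl x) 1 ×ˢ Icc (0:ℝ) 1) = 1 := by
    rw [← measure_union disj_left (measurableSet_Ioc.prod measurableSet_Icc),
      ← Set.union_prod, Icc_union_Ioc_eq_Icc hx'.1 hx'.2, hsupp]
  have e2 : μ (Ioc (cl x) 1 ×ˢ Icc (0:ℝ) (cl y)) + μ (Ioc (cl x) 1 ×ˢ Ioc (cl y) 1)
      = μ (Ioc (cl x) 1 ×ˢ Icc (0:ℝ) 1) := by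
    rw [← measure_union disj_right (measurableSet_Ioc.prod measurableSet_Ioc),
      ← Set.prod_union, Icc_union_Ioc_eq_Icc hy'.1 hy'.2]
  have e3 : μ (Icc (0:ℝ) (cl x) ×ˢ Icc (0:ℝ) (cl y)) + μ (Ioc (cl x) 1 ×ˢ Icc (0:ℝ) (cl y))
      = μ (Icc (0:ℝ) 1 ×ˢ Icc (0:ℝ) (cl y)) := by
    rw [← measure_union disj_left (measurableSet_Ioc.prod measurableSet_Icc),
      ← Set.union_prod, Icc_union_Ioc_eq_Icc hx'.1 hx'.2]
  rw [hμC (cl x) hx' 1 ⟨zero_le_one, le_rfl⟩, hC.margin_left (cl x) hx'] at e1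
  rw [hμC (cl x) hx' (cl y) hy', hμC 1 ⟨zero_le_one, le_rfl⟩ (cl y) hy',
    hC.margin_right (cl y) hy'] at e3
  -- convert to reals
  have hCnn : 0 ≤ C (cl x) (cl y) := C_nonneg hC hx' hy'
  have f1 := congrArg ENNReal.toReal e1
  have f2 := congrArg ENNReal.toReal e2
  have f3 := congrArg ENNReal.toReal e3
  rw [ENNReal.toReal_add (by simp) (measure_ne_top _ _), ENNReal.toReal_ofReal hx'.1,
    ENNReal.toReal_one] at f1
  rw [ENNReal.toReal_add (measure_ne_top _ _) (measure_ne_top _ _)] at f2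
  rw [ENNReal.toReal_add (by simp) (measure_ne_top _ _), ENNReal.toReal_ofReal hCnn,
    ENNReal.toReal_ofReal hy'.1] at f3
  have hval : (μ (Ioc (cl x) 1 ×ˢ Ioc (cl y) 1)).toReal
      = 1 - cl x - cl y + C (cl x) (cl y) := by linarith
  rw [hset, hstepA, ← ENNReal.ofReal_toReal (measure_ne_top μ (Ioc (cl x) 1 ×ˢ Ioc (cl y) 1)),
    hval]
  congr 1
  simp only [Dfun, sub_sub_cancel]
  ring

private lemma surv1 (C : ℝ → ℝ → ℝ) (hC : IsCopula2 C)
    (μ : Measure (ℝ × ℝ)) [IsProbabilityMeasure μ]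
    (hsupp : μ (Icc (0:ℝ) 1 ×ˢ Icc (0:ℝ) 1) = 1)
    (hμC : ∀ u ∈ Icc (0:ℝ) 1, ∀ v ∈ Icc (0:ℝ) 1,
      μ (Icc 0 u ×ˢ Icc 0 v) = ENNReal.ofReal (C u v))
    (a b : ℝ) :
    μ {p : ℝ × ℝ | 1 * p.1 > a ∧ 1 * p.2 > b}
      = ENNReal.ofReal (Dfun C (1 - cl a) (1 - cl b)) := by
  rw [show {p : ℝ × ℝ | 1 * p.1 > a ∧ 1 * p.2 > b} = {p : ℝ × ℝ | p.1 > a ∧ p.2 > b} by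
    ext p; simp, surv C hC μ hsupp hμC a b]

private lemma surv2 (C : ℝ → ℝ → ℝ) (hC : IsCopula2 C)
    (μ : Measure (ℝ × ℝ)) [IsProbabilityMeasure μ]
    (hsupp : μ (Icc (0:ℝ) 1 ×ˢ Icc (0:ℝ) 1) = 1)
    (hμC : ∀ u ∈ Icc (0:ℝ) 1, ∀ v ∈ Icc (0:ℝ) 1,
      μ (Icc 0 u ×ˢ Icc 0 v) = ENNReal.ofReal (C u v))
    (a b c d : ℝ) :
    μ {p : ℝ × ℝ | (1 * p.1 > a ∧ 1 * p.2 > b) ∧ (1 * p.1 > c ∧ 1 * p.2 > d)}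
      = ENNReal.ofReal (Dfun C (1 - cl (max a c)) (1 - cl (max b d))) := by
  rw [show {p : ℝ × ℝ | (1 * p.1 > a ∧ 1 * p.2 > b) ∧ (1 * p.1 > c ∧ 1 * p.2 > d)}
      = {p : ℝ × ℝ | p.1 > max a c ∧ p.2 > max b d} by
    ext p; simp only [mem_setOf_eq, one_mul, gt_iff_lt, max_lt_iff]; tauto,
    surv C hC μ hsupp hμC (max a c) (max b d)]

private lemma key {C : ℝ → ℝ → ℝ} (hC : IsCopula2 C)
    (H : ∀ u ∈ Icc (0:ℝ) 1, ∀ v ∈ Icc (0:ℝ) 1, ∀ u' ∈ Icc (0:ℝ) 1, ∀ v' ∈ Icc (0:ℝ) 1,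
      u ≤ u' → v ≤ v' → Dfun C u v' * Dfun C u' v ≤ Dfun C u v * Dfun C u' v')
    {a1 a2 a1' a2' a1'' a2'' : ℝ}
    (m1 : a1 ∈ Icc (0:ℝ) 1) (m2 : a2 ∈ Icc (0:ℝ) 1)
    (m1' : a1' ∈ Icc (0:ℝ) 1) (m2' : a2' ∈ Icc (0:ℝ) 1)
    (m1'' : a1'' ∈ Icc (0:ℝ) 1) (m2'' : a2'' ∈ Icc (0:ℝ) 1)
    (h1 : a1'' ≤ a1') (h2 : a2'' ≤ a2') :
    Dfun C (min a1 a1') (min a2 a2') * Dfun C a1'' a2''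
      ≤ Dfun C (min a1 a1'') (min a2 a2'') * Dfun C a1' a2' := by
  set b1 := min a1 a1' with hb1
  set b2 := min a2 a2' with hb2
  have mb1 : b1 ∈ Icc (0:ℝ) 1 := memI_min m1 m1'
  have mb2 : b2 ∈ Icc (0:ℝ) 1 := memI_min m2 m2'
  have hc1 : min a1 a1'' = min b1 a1'' := by rw [hb1, min_assoc, min_eq_right h1]
  have hc2 : min a2 a2'' = min b2 a2'' := by rw [hb2, min_assoc, min_eq_right h2]
  rw [hc1, hc2]
  have msb1 : max b1 a1'' ∈ Icc (0:ℝ) 1 := memI_max mb1 m1''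
  have msb2 : max b2 a2'' ∈ Icc (0:ℝ) 1 := memI_max mb2 m2''
  have step1 : Dfun C b1 b2 * Dfun C a1'' a2''
      ≤ Dfun C (min b1 a1'') (min b2 a2'') * Dfun C (max b1 a1'') (max b2 a2'') := by
    rcases le_total b1 a1'' with hx | hx <;> rcases le_total b2 a2'' with hy | hy
    · rw [min_eq_left hx, min_eq_left hy, max_eq_right hx, max_eq_right hy]
    · rw [min_eq_left hx, min_eq_right hy, max_eq_right hx, max_eq_left hy]
      exact H b1 mb1 a2'' m2'' a1'' m1'' b2 mb2 hx hy
    · rw [min_eq_right hx, min_eq_left hy, max_eq_left hx, max_eq_right hy]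
      calc Dfun C b1 b2 * Dfun C a1'' a2'' = Dfun C a1'' a2'' * Dfun C b1 b2 := mul_comm _ _
        _ ≤ Dfun C a1'' b2 * Dfun C b1 a2'' := H a1'' m1'' b2 mb2 b1 mb1 a2'' m2'' hx hy
    · rw [min_eq_right hx, min_eq_right hy, max_eq_left hx, max_eq_left hy]
      exact le_of_eq (mul_comm _ _)
  have step2 : Dfun C (max b1 a1'') (max b2 a2'') ≤ Dfun C a1' a2' := by
    calc Dfun C (max b1 a1'') (max b2 a2'')
        ≤ Dfun C a1' (max b2 a2'') :=
          D_mono_left hC msb1 m1' msb2 (max_le (min_le_right _ _) h1)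
      _ ≤ Dfun C a1' a2' :=
          D_mono_right hC m1' msb2 m2' (max_le (min_le_right _ _) h2)
  calc Dfun C b1 b2 * Dfun C a1'' a2''
      ≤ Dfun C (min b1 a1'') (min b2 a2'') * Dfun C (max b1 a1'') (max b2 a2'') := step1
    _ ≤ Dfun C (min b1 a1'') (min b2 a2'') * Dfun C a1' a2' :=
        mul_le_mul_of_nonneg_left step2 (D_nonneg hC (memI_min mb1 m1'') (memI_min mb2 m2''))

theorem copula_I_1_1_iff (C : ℝ → ℝ → ℝ) (hC : IsCopula2 C)
    (μ : Measure (ℝ × ℝ)) [IsProbabilityMeasure μ]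
    (hsupp : μ (Icc (0:ℝ) 1 ×ˢ Icc (0:ℝ) 1) = 1)
    (hμC : ∀ u ∈ Icc (0:ℝ) 1, ∀ v ∈ Icc (0:ℝ) 1,
      μ (Icc 0 u ×ˢ Icc 0 v) = ENNReal.ofReal (C u v))
    (Chat : ℝ → ℝ → ℝ)
    (hChat : ∀ u v : ℝ, Chat u v = u + v - 1 + C (1 - u) (1 - v)) :
    IsIncDir2 μ 1 1 ↔
      ∀ u ∈ Icc (0:ℝ) 1, ∀ v ∈ Icc (0:ℝ) 1, ∀ u' ∈ Icc (0:ℝ) 1, ∀ v' ∈ Icc (0:ℝ) 1,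
        u ≤ u' → v ≤ v' →
        Chat u v * Chat u' v' ≥ Chat u v' * Chat u' v := by
  constructor
  · intro H u hu v hv u' hu' v' hv' huu hvv
    have h := H (1 - u) (1 - v') (1 - u') (1 - v') (1 - u') (1 - v) le_rfl (by linarith)
    rw [surv2 C hC μ hsupp hμC, surv1 C hC μ hsupp hμC, surv2 C hC μ hsupp hμC,
      surv1 C hC μ hsupp hμC] at h
    have c1 : cl (max (1 - u) (1 - u')) = 1 - u := by
      rw [max_eq_left (by linarith), cl_of_mem ⟨by linarith [hu.2], by linarith [hu.1]⟩]
    have c2 : cl (max (1 - v') (1 - v')) = 1 - v' := by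
      rw [max_self, cl_of_mem ⟨by linarith [hv'.2], by linarith [hv'.1]⟩]
    have c3 : cl (max (1 - v') (1 - v)) = 1 - v := by
      rw [max_eq_right (by linarith), cl_of_mem ⟨by linarith [hv.2], by linarith [hv.1]⟩]
    have c4 : cl (1 - u') = 1 - u' := cl_of_mem ⟨by linarith [hu'.2], by linarith [hu'.1]⟩
    have c5 : cl (1 - v) = 1 - v := cl_of_mem ⟨by linarith [hv.2], by linarith [hv.1]⟩
    have c6 : cl (1 - v') = 1 - v' := cl_of_mem ⟨by linarith [hv'.2], by linarith [hv'.1]⟩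
    rw [c1, c2, c3, c4, c5, c6] at h
    simp only [sub_sub_cancel] at h
    rw [← ENNReal.ofReal_mul (D_nonneg hC hu hv'), ← ENNReal.ofReal_mul (D_nonneg hC hu hv)] at h
    have hr := (ENNReal.ofReal_le_ofReal_iff
      (mul_nonneg (D_nonneg hC hu hv) (D_nonneg hC hu' hv'))).mp h
    simpa only [hChat, Dfun, ge_iff_le] using hr
  · intro H x₁ x₂ x₁' x₂' x₁'' x₂'' h1 h2
    have H' : ∀ u ∈ Icc (0:ℝ) 1, ∀ v ∈ Icc (0:ℝ) 1, ∀ u' ∈ Icc (0:ℝ) 1, ∀ v' ∈ Icc (0:ℝ) 1,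
        u ≤ u' → v ≤ v' → Dfun C u v' * Dfun C u' v ≤ Dfun C u v * Dfun C u' v' := by
      intro u hu v hv u' hu' v' hv' hle hle'
      have := H u hu v hv u' hu' v' hv' hle hle'
      simpa only [hChat, Dfun, ge_iff_le] using this
    rw [surv2 C hC μ hsupp hμC, surv1 C hC μ hsupp hμC, surv2 C hC μ hsupp hμC,
      surv1 C hC μ hsupp hμC]
    simp only [cl_max, one_sub_max]
    rw [← ENNReal.ofReal_mul (D_nonneg hC (memI_min (one_sub_cl_mem x₁) (one_sub_cl_mem x₁'))
        (memI_min (one_sub_cl_mem x₂) (one_sub_cl_mem x₂'))),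
      ← ENNReal.ofReal_mul (D_nonneg hC (memI_min (one_sub_cl_mem x₁) (one_sub_cl_mem x₁''))
        (memI_min (one_sub_cl_mem x₂) (one_sub_cl_mem x₂'')))]
    apply ENNReal.ofReal_le_ofReal
    exact key hC H' (one_sub_cl_mem x₁) (one_sub_cl_mem x₂) (one_sub_cl_mem x₁')
      (one_sub_cl_mem x₂') (one_sub_cl_mem x₁'') (one_sub_cl_mem x₂'')
      (by linarith [cl_mono h1]) (by linarith [cl_mono h2])
end

section
/- For the Ali–Mikhail–Haq family of 2-copulas C_δ(u,v) = uv / (1 + δ(1-u)(1-v)): if δ ∈ [0,1] then C_δ satisfies the I(1,-1) characterizing inequality [v - C_δ(u,v)]·[v' - C_δ(u',v')] ≤ [v - C_δ(u',v)]·[v' - C_δ(u,v')] and the I(-1,1) characterizing inequality [u - C_δ(u,v)]·[u' - C_δ(u',v')] ≤ [u' - C_δ(u',v)]·[u - C_δ(u,v')] for all u ≤ u' and v ≤ v' in [0,1]; and if δ ∈ [-1,0] then C_δ satisfies the I(-1,-1) characterizing inequality C_δ(u,v)·C_δ(u',v') ≥ C_δ(u,v')·C_δ(u',v) and the I(1,1)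 characterizing inequality Ĉ_δ(u,v)·Ĉ_δ(u',v') ≥ Ĉ_δ(u,v')·Ĉ_δ(u',v) for all u ≤ u' and v ≤ v' in [0,1]. -/
open Set

set_option maxHeartbeats 1000000

/-- The Ali–Mikhail–Haq copula `C_δ(u,v) = uv / (1 + δ(1-u)(1-v))` satisfies the
characterizing inequalities for I(1,-1) and I(-1,1) when `δ ∈ [0,1]`, and the
characterizing inequalities for I(-1,-1) and I(1,1) when `δ ∈ [-1,0]`. -/
theorem AMH_directional_inequalities (δ : ℝ)
    (C : ℝ → ℝ → ℝ) (hC : ∀ u v : ℝ, C u v = u * v / (1 + δ * (1 - u) * (1 - v)))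
    (Chat : ℝ → ℝ → ℝ) (hChat : ∀ u v : ℝ, Chat u v = u + v - 1 + C (1 - u) (1 - v)) :
    (δ ∈ Icc (0:ℝ) 1 →
      (∀ u ∈ Icc (0:ℝ) 1, ∀ v ∈ Icc (0:ℝ) 1, ∀ u' ∈ Icc (0:ℝ) 1, ∀ v' ∈ Icc (0:ℝ) 1,
        u ≤ u' → v ≤ v' →
        (v - C u v) * (v' - C u' v') ≤ (v - C u' v) * (v' - C u v')) ∧
      (∀ u ∈ Icc (0:ℝ) 1, ∀ v ∈ Icc (0:ℝ) 1, ∀ u' ∈ Icc (0:ℝ) 1, ∀ v' ∈ Icc (0:ℝ) 1,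
        u ≤ u' → v ≤ v' →
        (u - C u v) * (u' - C u' v') ≤ (u' - C u' v) * (u - C u v'))) ∧
    (δ ∈ Icc (-1:ℝ) 0 →
      (∀ u ∈ Icc (0:ℝ) 1, ∀ v ∈ Icc (0:ℝ) 1, ∀ u' ∈ Icc (0:ℝ) 1, ∀ v' ∈ Icc (0:ℝ) 1,
        u ≤ u' → v ≤ v' →
        C u v * C u' v' ≥ C u v' * C u' v) ∧
      (∀ u ∈ Icc (0:ℝ) 1, ∀ v ∈ Icc (0:ℝ) 1, ∀ u' ∈ Icc (0:ℝ) 1, ∀ v' ∈ Icc (0:ℝ) 1,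
        u ≤ u' → v ≤ v' →
        Chat u v * Chat u' v' ≥ Chat u v' * Chat u' v)) := by
  constructor
  · rintro ⟨hδ0, hδ1⟩
    have hDpos : ∀ x y : ℝ, x ∈ Icc (0:ℝ) 1 → y ∈ Icc (0:ℝ) 1 →
        0 < 1 + δ * (1 - x) * (1 - y) := by
      rintro x y ⟨hx0, hx1⟩ ⟨hy0, hy1⟩
      nlinarith [mul_nonneg (mul_nonneg hδ0 (sub_nonneg.2 hx1)) (sub_nonneg.2 hy1)]
    constructor
    · intro u hu v hv u' hu' v' hv' huu hvv
      have d11 := hDpos u v hu hv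
      have d22 := hDpos u' v' hu' hv'
      have d21 := hDpos u' v hu' hv
      have d12 := hDpos u v' hu hv'
      have e11 : v - C u v = v * (1 - u) * (1 + δ * (1 - v)) / (1 + δ * (1 - u) * (1 - v)) := by
        rw [hC]; field_simp; ring
      have e22 : v' - C u' v' =
          v' * (1 - u') * (1 + δ * (1 - v')) / (1 + δ * (1 - u') * (1 - v')) := by
        rw [hC]; field_simp; ring
      have e21 : v - C u' v = v * (1 - u') * (1 + δ * (1 - v)) / (1 + δ * (1 - u') * (1 - v)) := by
        rw [hC]; field_simp; ring
      have e12 : v' - C u v' =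
          v' * (1 - u) * (1 + δ * (1 - v')) / (1 + δ * (1 - u) * (1 - v')) := by
        rw [hC]; field_simp; ring
      rw [e11, e22, e21, e12, div_mul_div_comm, div_mul_div_comm,
        div_le_div_iff₀ (mul_pos d11 d22) (mul_pos d21 d12)]
      have q1 : 0 ≤ 1 + δ * (1 - v) := by nlinarith [mul_nonneg hδ0 (sub_nonneg.2 hv.2)]
      have q2 : 0 ≤ 1 + δ * (1 - v') := by nlinarith [mul_nonneg hδ0 (sub_nonneg.2 hv'.2)]
      have hP : 0 ≤ v * v' * (1 - u) * (1 - u') * (1 + δ * (1 - v)) * (1 + δ * (1 - v')) := by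
        have := mul_nonneg (mul_nonneg (mul_nonneg (mul_nonneg
          (mul_nonneg hv.1 hv'.1) (sub_nonneg.2 hu.2)) (sub_nonneg.2 hu'.2)) q1) q2
        linarith
      have hq : 0 ≤ δ * (u' - u) * (v' - v) :=
        mul_nonneg (mul_nonneg hδ0 (sub_nonneg.2 huu)) (sub_nonneg.2 hvv)
      have key : v * (1 - u') * (1 + δ * (1 - v)) * (v' * (1 - u) * (1 + δ * (1 - v'))) *
            ((1 + δ * (1 - u) * (1 - v)) * (1 + δ * (1 - u') * (1 - v'))) -
          v * (1 - u) * (1 + δ * (1 - v)) * (v' * (1 - u') * (1 + δ * (1 - v'))) *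
            ((1 + δ * (1 - u') * (1 - v)) * (1 + δ * (1 - u) * (1 - v'))) =
          v * v' * (1 - u) * (1 - u') * (1 + δ * (1 - v)) * (1 + δ * (1 - v')) *
            (δ * (u' - u) * (v' - v)) := by ring
      linarith [mul_nonneg hP hq, key]
    · intro u hu v hv u' hu' v' hv' huu hvv
      have d11 := hDpos u v hu hv
      have d22 := hDpos u' v' hu' hv'
      have d21 := hDpos u' v hu' hv
      have d12 := hDpos u v' hu hv'
      have e11 : u - C u v = u * (1 - v) * (1 + δ * (1 - u)) / (1 + δ * (1 - u) * (1 - v)) := by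
        rw [hC]; field_simp; ring
      have e22 : u' - C u' v' =
          u' * (1 - v') * (1 + δ * (1 - u')) / (1 + δ * (1 - u') * (1 - v')) := by
        rw [hC]; field_simp; ring
      have e21 : u' - C u' v =
          u' * (1 - v) * (1 + δ * (1 - u')) / (1 + δ * (1 - u') * (1 - v)) := by
        rw [hC]; field_simp; ring
      have e12 : u - C u v' = u * (1 - v') * (1 + δ * (1 - u)) / (1 + δ * (1 - u) * (1 - v')) := by
        rw [hC]; field_simp; ring
      rw [e11, e22, e21, e12, div_mul_div_comm, div_mul_div_comm,
        div_le_div_iff₀ (mul_pos d11 d22) (mul_pos d21 d12)]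
      have q1 : 0 ≤ 1 + δ * (1 - u) := by nlinarith [mul_nonneg hδ0 (sub_nonneg.2 hu.2)]
      have q2 : 0 ≤ 1 + δ * (1 - u') := by nlinarith [mul_nonneg hδ0 (sub_nonneg.2 hu'.2)]
      have hP : 0 ≤ u * u' * (1 - v) * (1 - v') * (1 + δ * (1 - u)) * (1 + δ * (1 - u')) := by
        have := mul_nonneg (mul_nonneg (mul_nonneg (mul_nonneg
          (mul_nonneg hu.1 hu'.1) (sub_nonneg.2 hv.2)) (sub_nonneg.2 hv'.2)) q1) q2
        linarith
      have hq : 0 ≤ δ * (u' - u) * (v' - v) :=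
        mul_nonneg (mul_nonneg hδ0 (sub_nonneg.2 huu)) (sub_nonneg.2 hvv)
      have key : u' * (1 - v) * (1 + δ * (1 - u')) * (u * (1 - v') * (1 + δ * (1 - u))) *
            ((1 + δ * (1 - u) * (1 - v)) * (1 + δ * (1 - u') * (1 - v'))) -
          u * (1 - v) * (1 + δ * (1 - u)) * (u' * (1 - v') * (1 + δ * (1 - u'))) *
            ((1 + δ * (1 - u') * (1 - v)) * (1 + δ * (1 - u) * (1 - v'))) =
          u * u' * (1 - v) * (1 - v') * (1 + δ * (1 - u)) * (1 + δ * (1 - u')) *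
            (δ * (u' - u) * (v' - v)) := by ring
      linarith [mul_nonneg hP hq, key]
  · rintro ⟨hδ0, hδ1⟩
    have hmδ : 0 ≤ -δ := by linarith
    have h1δ : 0 ≤ 1 + δ := by linarith
    constructor
    · intro u hu v hv u' hu' v' hv' huu hvv
      by_cases h11 : 0 < 1 + δ * (1 - u) * (1 - v)
      · have d12 : 0 < 1 + δ * (1 - u) * (1 - v') := by
          nlinarith [mul_nonneg (mul_nonneg hmδ (sub_nonneg.2 hu.2)) (sub_nonneg.2 hvv)]
        have d21 : 0 < 1 + δ * (1 - u') * (1 - v) := by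
          nlinarith [mul_nonneg (mul_nonneg hmδ (sub_nonneg.2 hv.2)) (sub_nonneg.2 huu)]
        have d22 : 0 < 1 + δ * (1 - u') * (1 - v') := by
          nlinarith [mul_nonneg (mul_nonneg hmδ (sub_nonneg.2 hv'.2)) (sub_nonneg.2 huu)]
        rw [ge_iff_le, hC u v, hC u' v', hC u v', hC u' v, div_mul_div_comm, div_mul_div_comm,
          div_le_div_iff₀ (mul_pos d12 d21) (mul_pos h11 d22)]
        have hK : 0 ≤ u * v * u' * v' :=
          mul_nonneg (mul_nonneg (mul_nonneg hu.1 hv.1) hu'.1) hv'.1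
        have hq : 0 ≤ (-δ) * (u' - u) * (v' - v) :=
          mul_nonneg (mul_nonneg hmδ (sub_nonneg.2 huu)) (sub_nonneg.2 hvv)
        have key : u * v * (u' * v') * ((1 + δ * (1 - u) * (1 - v')) * (1 + δ * (1 - u') * (1 - v))) -
            u * v' * (u' * v) * ((1 + δ * (1 - u) * (1 - v)) * (1 + δ * (1 - u') * (1 - v'))) =
            u * v * u' * v' * ((-δ) * (u' - u) * (v' - v)) := by ring
        linarith [mul_nonneg hK hq, key]
      · have h11' : 1 + δ * (1 - u) * (1 - v) = 0 := by
          have hnn : 0 ≤ 1 + δ * (1 - u) * (1 - v) := by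
            nlinarith [mul_nonneg (mul_nonneg h1δ (sub_nonneg.2 hu.2)) (sub_nonneg.2 hv.2),
              mul_nonneg hu.1 (sub_nonneg.2 hv.2), hv.1]
          cases' (lt_or_eq_of_le hnn) with h h
          · exact absurd h h11
          · exact h.symm
        have hu0 : u = 0 := by
          have : u ≤ 0 := by
            nlinarith [mul_nonneg (mul_nonneg h1δ (sub_nonneg.2 hu.2)) (sub_nonneg.2 hv.2),
              mul_nonneg (sub_nonneg.2 hu.2) hv.1]
          linarith [hu.1]
        have hv0 : v = 0 := by
          have : v ≤ 0 := by
            nlinarith [mul_nonneg (mul_nonneg h1δ (sub_nonneg.2 hu.2)) (sub_nonneg.2 hv.2),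
              mul_nonneg (sub_nonneg.2 hv.2) hu.1]
          linarith [hv.1]
        subst hu0; subst hv0
        simp [hC]
    · intro u hu v hv u' hu' v' hv' huu hvv
      have ch : ∀ x y : ℝ, (1 + δ * x * y) ≠ 0 →
          Chat x y = x * y * (1 + δ * (x + y - 1)) / (1 + δ * x * y) := by
        intro x y h
        rw [hChat, hC, show (1:ℝ) - (1 - x) = x from by ring,
          show (1:ℝ) - (1 - y) = y from by ring]
        rw [eq_div_iff h, add_mul, div_mul_cancel₀ _ h]
        ring
      have hE22nn : 0 ≤ 1 + δ * u' * v' := by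
        nlinarith [mul_nonneg (mul_nonneg h1δ hu'.1) hv'.1,
          mul_nonneg hu'.1 (sub_nonneg.2 hv'.2), hu'.2]
      by_cases hE22 : 0 < 1 + δ * u' * v'
      · have hE21 : 0 < 1 + δ * u' * v := by
          nlinarith [mul_nonneg (mul_nonneg hmδ hu'.1) (sub_nonneg.2 hvv)]
        have hE12 : 0 < 1 + δ * u * v' := by
          nlinarith [mul_nonneg (mul_nonneg hmδ hv'.1) (sub_nonneg.2 huu)]
        have hE11 : 0 < 1 + δ * u * v := by
          nlinarith [mul_nonneg (mul_nonneg hmδ hu.1) (sub_nonneg.2 hvv)]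
        rw [ge_iff_le, ch u v hE11.ne', ch u' v' hE22.ne', ch u v' hE12.ne', ch u' v hE21.ne',
          div_mul_div_comm, div_mul_div_comm,
          div_le_div_iff₀ (mul_pos hE12 hE21) (mul_pos hE11 hE22)]
        have hK : 0 ≤ u * v * u' * v' :=
          mul_nonneg (mul_nonneg (mul_nonneg hu.1 hv.1) hu'.1) hv'.1
        have hq : 0 ≤ (-δ) * (u' - u) * (v' - v) :=
          mul_nonneg (mul_nonneg hmδ (sub_nonneg.2 huu)) (sub_nonneg.2 hvv)
        have hf11 : 1 + δ * u * v ≤ 1 + δ * (u + v - 1) := by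
          nlinarith [mul_nonneg (mul_nonneg hmδ (sub_nonneg.2 hu.2)) (sub_nonneg.2 hv.2)]
        have hf22 : 1 + δ * u' * v' ≤ 1 + δ * (u' + v' - 1) := by
          nlinarith [mul_nonneg (mul_nonneg hmδ (sub_nonneg.2 hu'.2)) (sub_nonneg.2 hv'.2)]
        have hbr : 0 ≤ (1 + δ * (u + v - 1)) * (1 + δ * (u' + v' - 1)) +
            δ * ((1 + δ * u * v) * (1 + δ * u' * v')) := by
          have hprod : (1 + δ * u * v) * (1 + δ * u' * v') ≤
              (1 + δ * (u + v - 1)) * (1 + δ * (u' + v' - 1)) :=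
            mul_le_mul hf11 hf22 hE22nn (le_trans hE11.le hf11)
          nlinarith [mul_nonneg (mul_nonneg h1δ hE11.le) hE22nn]
        have key : u * v * (1 + δ * (u + v - 1)) * (u' * v' * (1 + δ * (u' + v' - 1))) *
              ((1 + δ * u * v') * (1 + δ * u' * v)) -
            u * v' * (1 + δ * (u + v' - 1)) * (u' * v * (1 + δ * (u' + v - 1))) *
              ((1 + δ * u * v) * (1 + δ * u' * v')) =
            u * v * u' * v' * ((-δ) * (u' - u) * (v' - v)) *
              ((1 + δ * (u + v - 1)) * (1 + δ * (u' + v' - 1)) +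
                δ * ((1 + δ * u * v) * (1 + δ * u' * v'))) := by ring
        linarith [mul_nonneg (mul_nonneg hK hq) hbr, key]
      · have hE0 : 1 + δ * u' * v' = 0 := by
          cases' (lt_or_eq_of_le hE22nn) with h h
          · exact absurd h hE22
          · exact h.symm
        have hu1 : u' = 1 := by
          have : 1 ≤ u' := by
            nlinarith [mul_nonneg (mul_nonneg h1δ hu'.1) hv'.1,
              mul_nonneg hu'.1 (sub_nonneg.2 hv'.2)]
          linarith [hu'.2]
        have hv1 : v' = 1 := by
          have : 1 ≤ v' := by
            nlinarith [mul_nonneg (mul_nonneg h1δ hu'.1) hv'.1,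
              mul_nonneg hv'.1 (sub_nonneg.2 hu'.2)]
          linarith [hv'.2]
        subst hu1; subst hv1
        have c1 : ∀ x : ℝ, Chat x 1 = x := by
          intro x; rw [hChat, hC]; norm_num
        have c2 : ∀ y : ℝ, Chat 1 y = y := by
          intro y; rw [hChat, hC]; norm_num
        rw [ge_iff_le, c1, c2, c1 1]
        have goal' : u * v ≤ Chat u v := by
          by_cases hE11 : 0 < 1 + δ * u * v
          · rw [ch u v hE11.ne', le_div_iff₀ hE11]
            nlinarith [mul_nonneg (mul_nonneg (mul_nonneg (mul_nonneg hmδ hu.1) hv.1)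
              (sub_nonneg.2 hu.2)) (sub_nonneg.2 hv.2)]
          · have hE11nn : 0 ≤ 1 + δ * u * v := by
              nlinarith [mul_nonneg (mul_nonneg h1δ hu.1) hv.1,
                mul_nonneg hu.1 (sub_nonneg.2 hv.2), hu.2]
            have hE0' : 1 + δ * u * v = 0 := by
              cases' (lt_or_eq_of_le hE11nn) with h h
              · exact absurd h hE11
              · exact h.symm
            have hu1' : u = 1 := by
              have : 1 ≤ u := by
                nlinarith [mul_nonneg (mul_nonneg h1δ hu.1) hv.1,
                  mul_nonneg hu.1 (sub_nonneg.2 hv.2)]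
              linarith [hu.2]
            have hv1' : v = 1 := by
              have : 1 ≤ v := by
                nlinarith [mul_nonneg (mul_nonneg h1δ hu.1) hv.1,
                  mul_nonneg hv.1 (sub_nonneg.2 hu.2)]
              linarith [hv.2]
            subst hu1'; subst hv1'
            rw [c1]; norm_num
        nlinarith [goal']
end

section
/- For the Farlie–Gumbel–Morgenstern family of 2-copulas C_λ(u,v) = uv[1 + λ(1-u)(1-v)]: if λ ∈ [0,1] then C_λ satisfies the I(-1,-1) characterizing inequality C_λ(u,v)·C_λ(u',v') ≥ C_λ(u,v')·C_λ(u',v) and the I(1,1) characterizing inequality Ĉ_λ(u,v)·Ĉ_λ(u',v') ≥ Ĉ_λ(u,v')·Ĉ_λ(u',v) for all u ≤ u' and v ≤ v' in [0,1]; and if λ ∈ [-1,0] then C_λ satisfies the I(1,-1) characterizing inequality [v - C_λ(u,v)]·[v' - C_λ(u',v')] ≤ [v - C_λ(u',v)]·[v' - C_λ(u,v')] and the I(-1,1) characterizing inequality [u - C_λ(u,v)]·[u' - C_λ(u',v')] ≤ [u' - C_λ(u',v)]·[u - C_λ(u,v')] for all u ≤ u' and v ≤ v' in [0,1]. -/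
open Set

/-- The Farlie–Gumbel–Morgenstern copula `C_λ(u,v) = uv(1 + λ(1-u)(1-v))` satisfies
the characterizing inequalities for I(-1,-1) and I(1,1) when `λ ∈ [0,1]`, and the
characterizing inequalities for I(1,-1) and I(-1,1) when `λ ∈ [-1,0]`. -/
theorem FGM_directional_inequalities (lam : ℝ)
    (C : ℝ → ℝ → ℝ) (hC : ∀ u v : ℝ, C u v = u * v * (1 + lam * (1 - u) * (1 - v)))
    (Chat : ℝ → ℝ → ℝ) (hChat : ∀ u v : ℝ, Chat u v = u + v - 1 + C (1 - u) (1 - v)) :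
    (lam ∈ Icc (0:ℝ) 1 →
      (∀ u ∈ Icc (0:ℝ) 1, ∀ v ∈ Icc (0:ℝ) 1, ∀ u' ∈ Icc (0:ℝ) 1, ∀ v' ∈ Icc (0:ℝ) 1,
        u ≤ u' → v ≤ v' →
        C u v * C u' v' ≥ C u v' * C u' v) ∧
      (∀ u ∈ Icc (0:ℝ) 1, ∀ v ∈ Icc (0:ℝ) 1, ∀ u' ∈ Icc (0:ℝ) 1, ∀ v' ∈ Icc (0:ℝ) 1,
        u ≤ u' → v ≤ v' →
        Chat u v * Chat u' v' ≥ Chat u v' * Chat u' v)) ∧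
    (lam ∈ Icc (-1:ℝ) 0 →
      (∀ u ∈ Icc (0:ℝ) 1, ∀ v ∈ Icc (0:ℝ) 1, ∀ u' ∈ Icc (0:ℝ) 1, ∀ v' ∈ Icc (0:ℝ) 1,
        u ≤ u' → v ≤ v' →
        (v - C u v) * (v' - C u' v') ≤ (v - C u' v) * (v' - C u v')) ∧
      (∀ u ∈ Icc (0:ℝ) 1, ∀ v ∈ Icc (0:ℝ) 1, ∀ u' ∈ Icc (0:ℝ) 1, ∀ v' ∈ Icc (0:ℝ) 1,
        u ≤ u' → v ≤ v' →
        (u - C u v) * (u' - C u' v') ≤ (u' - C u' v) * (u - C u v'))) := by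
  constructor
  · rintro ⟨hl0, _⟩
    have main : ∀ u ∈ Icc (0:ℝ) 1, ∀ v ∈ Icc (0:ℝ) 1, ∀ u' ∈ Icc (0:ℝ) 1, ∀ v' ∈ Icc (0:ℝ) 1,
        u ≤ u' → v ≤ v' → C u v * C u' v' ≥ C u v' * C u' v := by
      intro u hu v hv u' hu' v' hv' huu hvv
      rw [ge_iff_le, ← sub_nonneg]
      have key : C u v * C u' v' - C u v' * C u' v
          = lam * ((u' - u) * (v' - v)) * (u * u' * (v * v')) := by
        simp only [hC]; ring
      rw [key]
      apply mul_nonneg (mul_nonneg hl0 (mul_nonneg (by linarith) (by linarith)))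
      apply mul_nonneg (mul_nonneg hu.1 hu'.1) (mul_nonneg hv.1 hv'.1)
    refine ⟨main, ?_⟩
    intro u hu v hv u' hu' v' hv' huu hvv
    have heq : ∀ a b : ℝ, Chat a b = C a b := by
      intro a b
      simp only [hChat, hC]; ring
    simp only [heq]
    exact main u hu v hv u' hu' v' hv' huu hvv
  · rintro ⟨_, hl0⟩
    constructor
    · intro u hu v hv u' hu' v' hv' huu hvv
      rw [← sub_nonneg]
      have key : (v - C u' v) * (v' - C u v') - (v - C u v) * (v' - C u' v')
          = (-lam) * ((u' - u) * (v' - v)) * (v * v' * ((1 - u) * (1 - u'))) := by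
        simp only [hC]; ring
      rw [key]
      apply mul_nonneg (mul_nonneg (by linarith) (mul_nonneg (by linarith) (by linarith)))
      apply mul_nonneg (mul_nonneg hv.1 hv'.1) (mul_nonneg (by linarith [hu.2]) (by linarith [hu'.2]))
    · intro u hu v hv u' hu' v' hv' huu hvv
      rw [← sub_nonneg]
      have key : (u' - C u' v) * (u - C u v') - (u - C u v) * (u' - C u' v')
          = (-lam) * ((u' - u) * (v' - v)) * (u * u' * ((1 - v) * (1 - v'))) := by
        simp only [hC]; ring
      rw [key]
      apply mul_nonneg (mul_nonneg (by linarith) (mul_nonneg (by linarith) (by linarith)))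
      apply mul_nonneg (mul_nonneg hu.1 hu'.1) (mul_nonneg (by linarith [hv.2]) (by linarith [hv'.2]))
end

section
/- For the trivariate Farlie–Gumbel–Morgenstern family C_λ(u₁,u₂,u₃) = u₁u₂u₃[1 + λ(1-u₁)(1-u₂)(1-u₃)] with λ ∈ [0,1], the I(-1,-1,-1) characterizing inequality holds: C_λ(u,v,w)·C_λ(u',v',w') ≥ C_λ(u,v',w')·C_λ(u',v,w) for all u, v, w, u', v', w' in [0,1] with u ≤ u', v ≤ v', w ≤ w'. -/
open Set

/-- The trivariate Farlie–Gumbel–Morgenstern copula with `λ ∈ [0,1]` satisfies the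
characterizing inequality for I(-1,-1,-1). -/
theorem FGM3_I_neg1neg1neg1 (lam : ℝ) (hlam : lam ∈ Icc (0:ℝ) 1)
    (C : ℝ → ℝ → ℝ → ℝ)
    (hC : ∀ u₁ u₂ u₃ : ℝ,
      C u₁ u₂ u₃ = u₁ * u₂ * u₃ * (1 + lam * (1 - u₁) * (1 - u₂) * (1 - u₃))) :
    ∀ u ∈ Icc (0:ℝ) 1, ∀ v ∈ Icc (0:ℝ) 1, ∀ w ∈ Icc (0:ℝ) 1,
    ∀ u' ∈ Icc (0:ℝ) 1, ∀ v' ∈ Icc (0:ℝ) 1, ∀ w' ∈ Icc (0:ℝ) 1,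
      u ≤ u' → v ≤ v' → w ≤ w' →
      C u v w * C u' v' w' ≥ C u v' w' * C u' v w := by
  rintro u ⟨hu0, hu1⟩ v ⟨hv0, hv1⟩ w ⟨hw0, hw1⟩ u' ⟨hu'0, hu'1⟩ v' ⟨hv'0, hv'1⟩
    w' ⟨hw'0, hw'1⟩ huu hvv hww
  have key : C u v w * C u' v' w' - C u v' w' * C u' v w =
      (u * v * w * u' * v' * w') * (lam * (u' - u) *
        ((1 - v) * (1 - w) - (1 - v') * (1 - w'))) := by
    simp only [hC]; ring
  have h1 : (0:ℝ) ≤ u * v * w * u' * v' * w' := by positivity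
  have h2 : (0:ℝ) ≤ (1 - v) * (1 - w) - (1 - v') * (1 - w') := by nlinarith
  have h3 : (0:ℝ) ≤ lam * (u' - u) * ((1 - v) * (1 - w) - (1 - v') * (1 - w')) := by
    exact mul_nonneg (mul_nonneg hlam.1 (sub_nonneg.2 huu)) h2
  nlinarith [mul_nonneg h1 h3]
end

section
/- For the trivariate Farlie–Gumbel–Morgenstern family C_λ(u₁,u₂,u₃) = u₁u₂u₃[1 + λ(1-u₁)(1-u₂)(1-u₃)] with λ ∈ [-1,0], the I(1,-1,-1) characterizing inequality holds: [vw - C_λ(u,v,w)]·[v'w' - C_λ(u',v',w')] ≤ [vw - C_λ(u',v,w)]·[v'w' - C_λ(u,v',w')] for all u, v, w, u', v', w' in [0,1] with u ≤ u', v ≤ v', w ≤ w'. -/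
open Set

/-- The trivariate Farlie–Gumbel–Morgenstern copula with `λ ∈ [-1,0]` satisfies the
characterizing inequality for I(1,-1,-1) (here `C₂₃(v,w) = vw`). -/
theorem FGM3_I_1neg1neg1 (lam : ℝ) (hlam : lam ∈ Icc (-1:ℝ) 0)
    (C : ℝ → ℝ → ℝ → ℝ)
    (hC : ∀ u₁ u₂ u₃ : ℝ,
      C u₁ u₂ u₃ = u₁ * u₂ * u₃ * (1 + lam * (1 - u₁) * (1 - u₂) * (1 - u₃))) :
    ∀ u ∈ Icc (0:ℝ) 1, ∀ v ∈ Icc (0:ℝ) 1, ∀ w ∈ Icc (0:ℝ) 1,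
    ∀ u' ∈ Icc (0:ℝ) 1, ∀ v' ∈ Icc (0:ℝ) 1, ∀ w' ∈ Icc (0:ℝ) 1,
      u ≤ u' → v ≤ v' → w ≤ w' →
      (v * w - C u v w) * (v' * w' - C u' v' w') ≤
        (v * w - C u' v w) * (v' * w' - C u v' w') := by
  intro u hu v hv w hw u' hu' v' hv' w' hw' huu hvv hww
  obtain ⟨hu0, hu1⟩ := hu
  obtain ⟨hv0, hv1⟩ := hv
  obtain ⟨hw0, hw1⟩ := hw
  obtain ⟨hu'0, hu'1⟩ := hu'
  obtain ⟨hv'0, hv'1⟩ := hv'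
  obtain ⟨hw'0, hw'1⟩ := hw'
  have hA : (1 - v') * (1 - w') ≤ (1 - v) * (1 - w) := by
    apply mul_le_mul (by linarith) (by linarith) (by linarith) (by linarith)
  have key : (v * w - C u' v w) * (v' * w' - C u v' w') -
      (v * w - C u v w) * (v' * w' - C u' v' w') =
      v * w * (v' * w') * (1 - u) * (1 - u') * (-lam) * (u' - u) *
        ((1 - v) * (1 - w) - (1 - v') * (1 - w')) := by
    simp only [hC]; ring
  have hprod : 0 ≤ v * w * (v' * w') * (1 - u) * (1 - u') * (-lam) * (u' - u) *
      ((1 - v) * (1 - w) - (1 - v') * (1 - w')) := by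
    have := hlam.2
    apply mul_nonneg
    apply mul_nonneg
    apply mul_nonneg
    apply mul_nonneg
    apply mul_nonneg
    apply mul_nonneg
    · exact mul_nonneg hv0 hw0
    · exact mul_nonneg hv'0 hw'0
    all_goals linarith
  linarith
end
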